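/- arXiv:1404.0818 — 3 statements merged into one kernel-verified Lean document; each statement's English description precedes it below -/
import Mathlib

section
/- Let G be a finite graph, let S ⊆ V(G), and let F be a finite family of S-stable separations of G. Define X := S ∪ ⋃_{(A,B)∈F} (A ∩ B). Then for every connected component of G ∖ X with vertex set Z, one has |N_G(Z)| ≤ |S|. -/
/-!
Common definitions: separations, stable separations, the improved graph,
external neighbourhoods, connected components, clique separations, and
rooted tree decompositions together with treewidth.
-/

section Defs

variable {V : Type} [Fintype V] [DecidableEq V]

/-- A separation of a graph `G`: a pair `(A, B)` covering the vertex set with no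
edge between `A \ B` and `B \ A`.  Its order is `(A ∩ B).card`. -/
def IsSeparation (G : SimpleGraph V) (A B : Finset V) : Prop :=
  A ∪ B = Finset.univ ∧ ∀ a ∈ A, a ∉ B → ∀ b ∈ B, b ∉ A → ¬G.Adj a b

/-- An `X`–`Y` separation: a separation `(A, B)` with `X ⊆ A` and `Y ⊆ B`. -/
def IsSepFor (G : SimpleGraph V) (X Y A B : Finset V) : Prop :=
  IsSeparation G A B ∧ X ⊆ A ∧ Y ⊆ B

/-- An `X`–`Y` separation of minimum possible order. -/
def IsMinSepFor (G : SimpleGraph V) (X Y A B : Finset V) : Prop :=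
  IsSepFor G X Y A B ∧ ∀ A' B', IsSepFor G X Y A' B' → (A ∩ B).card ≤ (A' ∩ B').card

/-- A separation `(A, B)` is `S`-stable if it is a minimum-order `S_L`–`S_R`
separation for some partition `(S_L, S_R)` of `S`. -/
def IsStable (G : SimpleGraph V) (S A B : Finset V) : Prop :=
  ∃ SL SR, Disjoint SL SR ∧ SL ∪ SR = S ∧ IsMinSepFor G SL SR A B

/-- `conn_G(x, y) < k`: there is a separation of order `< k` with `x ∈ A ∖ B` and
`y ∈ B ∖ A`.  (For adjacent `x, y` no such separation exists, i.e. `conn = +∞`.) -/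
def ConnLt (G : SimpleGraph V) (x y : V) (k : ℕ) : Prop :=
  ∃ A B, IsSeparation G A B ∧ x ∈ A ∧ x ∉ B ∧ y ∈ B ∧ y ∉ A ∧ (A ∩ B).card < k

/-- A graph is `k`-complemented when `conn(x,y) ≥ k` implies that `x` and `y` are
adjacent; equivalently, any two distinct nonadjacent vertices are separated by a
separation of order `< k`. -/
def KComplemented (G : SimpleGraph V) (k : ℕ) : Prop :=
  ∀ x y, x ≠ y → ¬G.Adj x y → ConnLt G x y k

lemma IsSeparation.symm2 {G : SimpleGraph V} {A B : Finset V} (h : IsSeparation G A B) :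
    IsSeparation G B A :=
  ⟨by rw [Finset.union_comm]; exact h.1,
   fun a ha ha' b hb hb' hadj => h.2 b hb hb' a ha ha' hadj.symm⟩

/-- The `k`-improved graph `G^{(k)}`: same vertices, and `xy` is an edge
iff `conn_G(x,y) ≥ k` (in particular all edges of `G` are kept). -/
def improvedGraph (G : SimpleGraph V) (k : ℕ) : SimpleGraph V where
  Adj x y := x ≠ y ∧ ¬ConnLt G x y k
  symm := by
    constructor
    rintro x y ⟨hxy, h⟩
    refine ⟨hxy.symm, ?_⟩
    rintro ⟨A, B, hsep, hy, hy', hx, hx', hc⟩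
    exact h ⟨B, A, hsep.symm2, hx, hx', hy, hy', by rwa [Finset.inter_comm]⟩
  loopless := ⟨fun x h => h.1 rfl⟩

/-- The external neighbourhood `N_G(Z)`: vertices outside `Z` with a neighbour in `Z`. -/
def extNbhd (G : SimpleGraph V) (Z : Set V) : Set V :=
  {v | v ∉ Z ∧ ∃ z ∈ Z, G.Adj v z}

/-- `Z` is the vertex set of a connected component of `G - X`: it is disjoint from `X`,
induces a connected subgraph, and all its neighbours outside itself lie in `X`. -/
def IsCompAway (G : SimpleGraph V) (X Z : Set V) : Prop :=
  Disjoint Z X ∧ (G.induce Z).Connected ∧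
    ∀ ⦃v z : V⦄, z ∈ Z → G.Adj v z → v ∉ Z → v ∈ X

/-- The subgraph of `G` induced on `W` admits no clique separation: there is no
separation `(A, B)` of `G[W]` with `A ∖ B ≠ ∅`, `B ∖ A ≠ ∅` and `A ∩ B` a clique. -/
def CliqueSepFreeOn (G : SimpleGraph V) (W : Finset V) : Prop :=
  ¬∃ A B : Finset V, A ∪ B = W ∧
      (∀ a ∈ A, a ∉ B → ∀ b ∈ B, b ∉ A → ¬G.Adj a b) ∧
      (A \ B).Nonempty ∧ (B \ A).Nonempty ∧ G.IsClique (↑(A ∩ B) : Set V)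

/-- A rooted tree decomposition of the subgraph of `G` induced on `W`.
The rooted tree is given by a finite node type with a parent function
(every node reaches the root by iterating `parent`);
for every vertex of `W` the nodes whose bags contain it form a nonempty connected
subtree, and every edge of `G[W]` lies inside some bag. -/
structure RTDOn (V : Type) [Fintype V] [DecidableEq V] (G : SimpleGraph V) (W : Finset V) where
  ι : Type
  instFintype : Fintype ι
  instDecEq : DecidableEq ι
  root : ι
  parent : ι → ι
  parent_root : parent root = root
  reaches_root : ∀ t, ∃ n, parent^[n] t = root
  bag : ι → Finset V
  bag_subset : ∀ t, bag t ⊆ W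
  bags_connected : ∀ v ∈ W,
    ((SimpleGraph.fromRel fun s t => parent s = t).induce {t | v ∈ bag t}).Connected
  edge_in_bag : ∀ u ∈ W, ∀ v ∈ W, G.Adj u v → ∃ t, u ∈ bag t ∧ v ∈ bag t

/-- A rooted tree decomposition of `G`. -/
abbrev RTD (V : Type) [Fintype V] [DecidableEq V] (G : SimpleGraph V) : Type 1 :=
  RTDOn V G Finset.univ

namespace RTDOn

variable {G : SimpleGraph V} {W : Finset V}

instance (D : RTDOn V G W) : Fintype D.ι := D.instFintype
instance (D : RTDOn V G W) : DecidableEq D.ι := D.instDecEq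

/-- The decomposition has width at most `w`, i.e. all bags have size at most `w + 1`. -/
def widthLe (D : RTDOn V G W) (w : ℕ) : Prop := ∀ t, (D.bag t).card ≤ w + 1

/-- The decomposition has adhesion width at most `ℓ`: for every tree edge
`(t, parent t)` the intersection of the two bags has size at most `ℓ`. -/
def adhesionLe (D : RTDOn V G W) (l : ℕ) : Prop :=
  ∀ t, t ≠ D.root → (D.bag t ∩ D.bag (D.parent t)).card ≤ l

/-- A family of potential bags captures a decomposition if every bag belongs to it. -/
def captures (D : RTDOn V G W) (ℬ : Finset (Finset V)) : Prop := ∀ t, D.bag t ∈ ℬ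

/-- `γ(t)`: union of the bags at all descendants of `t`. -/
def gammaSet (D : RTDOn V G W) (t : D.ι) : Set V :=
  {v | ∃ s, (∃ n, D.parent^[n] s = t) ∧ v ∈ D.bag s}

/-- `σ(t)`: the adhesion of `t` with its parent (empty at the root). -/
def sigmaBag (D : RTDOn V G W) (t : D.ι) : Finset V :=
  if t = D.root then ∅ else D.bag t ∩ D.bag (D.parent t)

/-- `α(t) = γ(t) ∖ σ(t)`. -/
def alphaSet (D : RTDOn V G W) (t : D.ι) : Set V := D.gammaSet t \ ↑(D.sigmaBag t)

end RTDOn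

/-- A rooted tree decomposition is connectivity-sensitive when every `G[α(t)]`
is connected and `σ(t) = N_G(α(t))`. -/
def IsCSDecomp {G : SimpleGraph V} (D : RTD V G) : Prop :=
  ∀ t, (G.induce (D.alphaSet t)).Connected ∧ extNbhd G (D.alphaSet t) = ↑(D.sigmaBag t)

/-- The treewidth of `G`: the least `w` such that `G` has a (rooted) tree
decomposition of width at most `w`. -/
noncomputable def treewidth (G : SimpleGraph V) : ℕ :=
  sInf {w : ℕ | ∃ D : RTD V G, D.widthLe w}

/-- `ℬ^{≤q}`: all sets of size at most `q` contained in some member of `ℬ`. -/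
def belowFam (ℬ : Finset (Finset V)) (q : ℕ) : Finset (Finset V) :=
  Finset.univ.filter fun X => X.card ≤ q ∧ ∃ B ∈ ℬ, X ⊆ B

end Defs

section Aux

variable {V : Type} [Fintype V] [DecidableEq V]

private lemma corner_sep {G : SimpleGraph V} {A B C D : Finset V}
    (hAB : IsSeparation G A B) (hCD : IsSeparation G C D) :
    IsSeparation G (A ∩ C) (B ∪ D) := by
  have hcoverAB : ∀ x : V, x ∈ A ∨ x ∈ B := by
    intro x
    have : x ∈ A ∪ B := by rw [hAB.1]; exact Finset.mem_univ x
    exact Finset.mem_union.1 this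
  have hcoverCD : ∀ x : V, x ∈ C ∨ x ∈ D := by
    intro x
    have : x ∈ C ∪ D := by rw [hCD.1]; exact Finset.mem_univ x
    exact Finset.mem_union.1 this
  constructor
  · apply Finset.eq_univ_iff_forall.2
    intro x
    by_cases hx : x ∈ B ∪ D
    · exact Finset.mem_union_right _ hx
    · have hxB : x ∉ B := fun h => hx (Finset.mem_union_left _ h)
      have hxD : x ∉ D := fun h => hx (Finset.mem_union_right _ h)
      have hxA : x ∈ A := (hcoverAB x).resolve_right hxB
      have hxC : x ∈ C := (hcoverCD x).resolve_right hxD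
      exact Finset.mem_union_left _ (Finset.mem_inter.2 ⟨hxA, hxC⟩)
  · intro a ha ha' b hb hb' hadj
    have haA : a ∈ A := (Finset.mem_inter.1 ha).1
    have haC : a ∈ C := (Finset.mem_inter.1 ha).2
    have haB : a ∉ B := fun h => ha' (Finset.mem_union_left _ h)
    have haD : a ∉ D := fun h => ha' (Finset.mem_union_right _ h)
    by_cases hbA : b ∈ A
    · have hbC : b ∉ C := fun h => hb' (Finset.mem_inter.2 ⟨hbA, h⟩)
      have hbD : b ∈ D := (hcoverCD b).resolve_left hbC
      exact hCD.2 a haC haD b hbD hbC hadj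
    · have hbB : b ∈ B := (hcoverAB b).resolve_left hbA
      exact hAB.2 a haA haB b hbB hbA hadj

private lemma submod_card {A B C D : Finset V} :
    ((A ∩ C) ∩ (B ∪ D)).card + ((A ∪ C) ∩ (B ∩ D)).card
      ≤ (A ∩ B).card + (C ∩ D).card := by
  have h1 : ((A ∩ C) ∩ (B ∪ D)) ∪ ((A ∪ C) ∩ (B ∩ D)) ⊆ (A ∩ B) ∪ (C ∩ D) := by
    intro x hx
    simp only [Finset.mem_union, Finset.mem_inter] at hx ⊢
    tauto
  have h2 : ((A ∩ C) ∩ (B ∪ D)) ∩ ((A ∪ C) ∩ (B ∩ D)) ⊆ (A ∩ B) ∩ (C ∩ D) := by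
    intro x hx
    simp only [Finset.mem_union, Finset.mem_inter] at hx ⊢
    tauto
  calc ((A ∩ C) ∩ (B ∪ D)).card + ((A ∪ C) ∩ (B ∩ D)).card
      = (((A ∩ C) ∩ (B ∪ D)) ∪ ((A ∪ C) ∩ (B ∩ D))).card
        + (((A ∩ C) ∩ (B ∪ D)) ∩ ((A ∪ C) ∩ (B ∩ D))).card :=
        (Finset.card_union_add_card_inter _ _).symm
    _ ≤ ((A ∩ B) ∪ (C ∩ D)).card + ((A ∩ B) ∩ (C ∩ D)).card :=
        Nat.add_le_add (Finset.card_le_card h1) (Finset.card_le_card h2)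
    _ = (A ∩ B).card + (C ∩ D).card := Finset.card_union_add_card_inter _ _

/-- Uncrossing step: given a separation `(P, Q)` with `S ⊆ P`, uncrossing with a
minimum `(SL, SR)`-separation `(A, B)` (where `SL ∪ SR = S`) does not increase
the order. -/
private lemma step_sep {G : SimpleGraph V} {S SL SR A B P Q : Finset V}
    (hmin : IsMinSepFor G SL SR A B) (hS : SL ∪ SR = S)
    (hPQ : IsSeparation G P Q) (hSP : S ⊆ P) :
    IsSeparation G (P ∪ B) (Q ∩ A) ∧ ((P ∪ B) ∩ (Q ∩ A)).card ≤ (P ∩ Q).card := by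
  obtain ⟨⟨hsepAB, hSLA, hSRB⟩, hminimal⟩ := hmin
  have s1 : IsSeparation G (Q ∩ A) (P ∪ B) := corner_sep hPQ.symm2 hsepAB
  have s2 : IsSeparation G (P ∩ B) (Q ∪ A) := corner_sep hPQ hsepAB.symm2
  have hcomp : IsSepFor G SL SR (Q ∪ A) (P ∩ B) := by
    refine ⟨s2.symm2, ?_, ?_⟩
    · exact hSLA.trans (Finset.subset_union_right)
    · intro x hx
      have hxS : x ∈ S := by rw [← hS]; exact Finset.mem_union_right _ hx
      exact Finset.mem_inter.2 ⟨hSP hxS, hSRB hx⟩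
  have hge := hminimal _ _ hcomp
  have hsub := submod_card (A := Q) (B := P) (C := A) (D := B)
  refine ⟨s1.symm2, ?_⟩
  have e1 : (P ∪ B) ∩ (Q ∩ A) = (Q ∩ A) ∩ (P ∪ B) := Finset.inter_comm _ _
  rw [Finset.inter_comm Q P] at hsub
  rw [e1]
  omega

private lemma flip_min {G : SimpleGraph V} {SL SR A B : Finset V}
    (hmin : IsMinSepFor G SL SR A B) : IsMinSepFor G SR SL B A := by
  obtain ⟨⟨hsep, hSL, hSR⟩, hm⟩ := hmin
  refine ⟨⟨hsep.symm2, hSR, hSL⟩, ?_⟩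
  intro A' B' h
  obtain ⟨hsep', hSR', hSL'⟩ := h
  have := hm B' A' ⟨hsep'.symm2, hSL', hSR'⟩
  rw [Finset.inter_comm B A]
  rwa [Finset.inter_comm B' A'] at this

private lemma walk_side {G : SimpleGraph V} {A B : Finset V} {Z : Set V}
    (hsep : IsSeparation G A B)
    (hdisj : ∀ z ∈ Z, ¬(z ∈ A ∧ z ∈ B)) :
    ∀ {u v : ↑Z}, (G.induce Z).Walk u v → ↑u ∈ A → ↑v ∈ A := by
  intro u v w
  induction w with
  | nil => exact fun h => h
  | @cons a b c h p ih =>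
      intro hu
      apply ih
      by_contra hw
      have hcover : (b : V) ∈ A ∪ B := by rw [hsep.1]; exact Finset.mem_univ _
      have hwB : (b : V) ∈ B := (Finset.mem_union.1 hcover).resolve_left hw
      have huB : (a : V) ∉ B := fun hb => hdisj a a.2 ⟨hu, hb⟩
      have hadj : G.Adj (a : V) (b : V) := h
      exact hsep.2 _ hu huB _ hwB hw hadj

private lemma comp_side {G : SimpleGraph V} {A B : Finset V} {Z : Set V}
    (hsep : IsSeparation G A B) (hconn : (G.induce Z).Connected)
    (hdisj : ∀ z ∈ Z, ¬(z ∈ A ∧ z ∈ B)) :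
    (∀ z ∈ Z, z ∈ A ∧ z ∉ B) ∨ (∀ z ∈ Z, z ∈ B ∧ z ∉ A) := by
  by_cases hex : ∃ z ∈ Z, z ∈ A
  · left
    obtain ⟨z0, hz0Z, hz0A⟩ := hex
    intro z hz
    obtain ⟨w⟩ := hconn.preconnected ⟨z0, hz0Z⟩ ⟨z, hz⟩
    have hzA : z ∈ A := walk_side hsep hdisj w hz0A
    exact ⟨hzA, fun hb => hdisj z hz ⟨hzA, hb⟩⟩
  · right
    push_neg at hex
    intro z hz
    have hcover : z ∈ A ∪ B := by rw [hsep.1]; exact Finset.mem_univ _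
    have hzB : z ∈ B := (Finset.mem_union.1 hcover).resolve_left (hex z hz)
    exact ⟨hzB, hex z hz⟩

/-- Main uncrossing lemma: starting from a separation `(P, Q)` with `S ⊆ P` and
`Z ⊆ Q \ P`, one can absorb the far sides of all separations in `F` into `P`
without increasing the order. -/
private lemma key_lemma {G : SimpleGraph V} {S : Finset V} {Z : Set V} :
    ∀ F : Finset (Finset V × Finset V),
      (∀ p ∈ F, IsStable G S p.1 p.2) →
      (∀ p ∈ F, (∀ z ∈ Z, z ∈ p.1 ∧ z ∉ p.2) ∨ (∀ z ∈ Z, z ∈ p.2 ∧ z ∉ p.1)) →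
      ∀ P Q : Finset V, IsSeparation G P Q → S ⊆ P →
        (∀ z ∈ Z, z ∈ Q ∧ z ∉ P) →
      ∃ P' Q', IsSeparation G P' Q' ∧ S ⊆ P' ∧ (∀ z ∈ Z, z ∈ Q' ∧ z ∉ P') ∧
        (∀ p ∈ F, p.1 ∩ p.2 ⊆ P') ∧ (P' ∩ Q').card ≤ (P ∩ Q).card := by
  intro F
  induction F using Finset.induction_on with
  | empty =>
      intro _ _ P Q h1 h2 h3
      exact ⟨P, Q, h1, h2, h3, by simp, le_rfl⟩
  | @insert p F hpF ih =>
      intro hstab hside P Q hPQ hSP hZQ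
      obtain ⟨P1, Q1, hPQ1, hSP1, hZQ1, hsepsP1, hcard1⟩ :=
        ih (fun q hq => hstab q (Finset.mem_insert_of_mem hq))
          (fun q hq => hside q (Finset.mem_insert_of_mem hq)) P Q hPQ hSP hZQ
      obtain ⟨SL, SR, _, hunion, hmin⟩ := hstab p (Finset.mem_insert_self _ _)
      rcases hside p (Finset.mem_insert_self _ _) with hZp | hZp
      · -- Z on the p.1 side: absorb p.2
        obtain ⟨hsep', hcard'⟩ := step_sep hmin hunion hPQ1 hSP1
        refine ⟨P1 ∪ p.2, Q1 ∩ p.1, hsep', hSP1.trans Finset.subset_union_left, ?_, ?_, hcard'.trans hcard1⟩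
        · intro z hz
          refine ⟨Finset.mem_inter.2 ⟨(hZQ1 z hz).1, (hZp z hz).1⟩, ?_⟩
          intro hmem
          rcases Finset.mem_union.1 hmem with h | h
          · exact (hZQ1 z hz).2 h
          · exact (hZp z hz).2 h
        · intro q hq
          rcases Finset.mem_insert.1 hq with rfl | hq
          · exact (Finset.inter_subset_right).trans Finset.subset_union_right
          · exact (hsepsP1 q hq).trans Finset.subset_union_left
      · -- Z on the p.2 side: absorb p.1
        obtain ⟨hsep', hcard'⟩ := step_sep (flip_min hmin) (by rw [Finset.union_comm]; exact hunion) hPQ1 hSP1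
        refine ⟨P1 ∪ p.1, Q1 ∩ p.2, hsep', hSP1.trans Finset.subset_union_left, ?_, ?_, hcard'.trans hcard1⟩
        · intro z hz
          refine ⟨Finset.mem_inter.2 ⟨(hZQ1 z hz).1, (hZp z hz).1⟩, ?_⟩
          intro hmem
          rcases Finset.mem_union.1 hmem with h | h
          · exact (hZQ1 z hz).2 h
          · exact (hZp z hz).2 h
        · intro q hq
          rcases Finset.mem_insert.1 hq with rfl | hq
          · exact (Finset.inter_subset_left).trans Finset.subset_union_right
          · exact (hsepsP1 q hq).trans Finset.subset_union_left

end Aux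

/-- If `F` is a finite family of `S`-stable separations and
`X = S ∪ ⋃_{(A,B) ∈ F} (A ∩ B)`, then every connected component `Z` of `G - X`
satisfies `|N_G(Z)| ≤ |S|`. -/
theorem stmt0 {V : Type} [Fintype V] [DecidableEq V] (G : SimpleGraph V)
    (S : Finset V) (F : Finset (Finset V × Finset V))
    (hF : ∀ p ∈ F, IsStable G S p.1 p.2)
    (X : Finset V) (hX : X = S ∪ F.sup fun p => p.1 ∩ p.2)
    (Z : Set V) (hZ : IsCompAway G (↑X) Z) :
    (extNbhd G Z).ncard ≤ S.card := by
  obtain ⟨hdisj, hconn, hnbr⟩ := hZ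
  have hZX : ∀ z ∈ Z, z ∉ X := fun z hz hzX => (Set.disjoint_left.1 hdisj) hz hzX
  have hsepX : ∀ p ∈ F, p.1 ∩ p.2 ⊆ X := by
    intro p hp
    intro x hx
    rw [hX]
    exact Finset.mem_union_right _ (Finset.mem_sup.mpr ⟨p, hp, hx⟩)
  have hSX : S ⊆ X := by rw [hX]; exact Finset.subset_union_left
  have hside : ∀ p ∈ F, (∀ z ∈ Z, z ∈ p.1 ∧ z ∉ p.2) ∨ (∀ z ∈ Z, z ∈ p.2 ∧ z ∉ p.1) := by
    intro p hp
    obtain ⟨SL, SR, _, _, ⟨⟨hsep, _, _⟩, _⟩⟩ := hF p hp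
    refine comp_side hsep hconn ?_
    intro z hz ⟨h1, h2⟩
    exact hZX z hz (hsepX p hp (Finset.mem_inter.2 ⟨h1, h2⟩))
  have hPQ0 : IsSeparation G S Finset.univ := by
    constructor
    · simp
    · intro a _ ha' b _ _ _
      exact ha' (Finset.mem_univ a)
  obtain ⟨P', Q', hsep', hSP', hZQ', hsepsP', hcard'⟩ :=
    key_lemma F hF hside S Finset.univ hPQ0 subset_rfl
      (fun z hz => ⟨Finset.mem_univ z, fun hzS => hZX z hz (hSX hzS)⟩)
  have hsub : extNbhd G Z ⊆ ↑(P' ∩ Q') := by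
    intro y hy
    obtain ⟨hyZ, z, hzZ, hadj⟩ := hy
    have hzQ := (hZQ' z hzZ).1
    have hzP := (hZQ' z hzZ).2
    have hyP' : y ∈ P' := by
      have hyX : y ∈ X := hnbr hzZ hadj hyZ
      rw [hX] at hyX
      rcases Finset.mem_union.1 hyX with h | h
      · exact hSP' h
      · obtain ⟨p, hpF, hyp⟩ := Finset.mem_sup.1 h
        exact hsepsP' p hpF hyp
    have hyQ' : y ∈ Q' := by
      by_contra hyQ
      exact hsep'.2 y hyP' hyQ z hzQ hzP hadj
    exact Finset.mem_inter.2 ⟨hyP', hyQ'⟩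
  calc (extNbhd G Z).ncard ≤ (↑(P' ∩ Q') : Set V).ncard :=
        Set.ncard_le_ncard hsub (Finset.finite_toSet _)
    _ = (P' ∩ Q').card := Set.ncard_coe_finset _
    _ ≤ (S ∩ Finset.univ).card := hcard'
    _ = S.card := by rw [Finset.inter_univ]
end

section
/- Let G be a finite connected graph of treewidth less than k, and let 𝓑 ⊆ 2^{V(G)} be a family of vertex sets that captures some rooted tree decomposition of G of width at most k' and adhesion width at most ℓ, where k ≤ ℓ ≤ k'. Then the family 𝓑^{≤(k+1)ℓ} captures some rooted tree decomposition of G of width at most (k+1)ℓ − 1. -/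
section Aux
set_option linter.unusedSectionVars false
set_option maxHeartbeats 1000000
open Finset
open scoped Classical

variable {V : Type} [Fintype V] [DecidableEq V] (G : SimpleGraph V)

/-! ### Generic reachability-within-a-set machinery on a parent function -/

/-- Symmetric step relation inside a set `S` for a parent function. -/
def pstep {ι : Type} (par : ι → ι) (S : Set ι) (a b : ι) : Prop :=
  a ∈ S ∧ b ∈ S ∧ a ≠ b ∧ (par a = b ∨ par b = a)

/-- Reachability within `S`. -/
def RS {ι : Type} (par : ι → ι) (S : Set ι) : ι → ι → Prop :=
  Relation.ReflTransGen (pstep par S)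

lemma pstep_symm {ι : Type} (par : ι → ι) (S : Set ι) : Symmetric (pstep par S) := by
  rintro a b ⟨h1, h2, h3, h4⟩; exact ⟨h2, h1, h3.symm, h4.symm⟩

lemma RS.symm {ι : Type} {par : ι → ι} {S : Set ι} {a b : ι} (h : RS par S a b) :
    RS par S b a := by
  haveI : Std.Symm (pstep par S) := ⟨fun _ _ h => pstep_symm par S h⟩
  exact Std.Symm.symm (r := Relation.ReflTransGen (pstep par S)) _ _ h

lemma RS.trans {ι : Type} {par : ι → ι} {S : Set ι} {a b c : ι}
    (h : RS par S a b) (h' : RS par S b c) : RS par S a c :=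
  Relation.ReflTransGen.trans h h'

lemma RS.mono {ι : Type} {par : ι → ι} {S T : Set ι} (hST : S ⊆ T) {a b : ι}
    (h : RS par S a b) : RS par T a b := by
  induction h with
  | refl => exact Relation.ReflTransGen.refl
  | tail _ h2 ih =>
    exact ih.tail ⟨hST h2.1, hST h2.2.1, h2.2.2.1, h2.2.2.2⟩

/-- From reachability within `S` we get reachability in the induced graph. -/
lemma reachable_of_RS {ι : Type} {par : ι → ι} {S : Set ι} {a b : ι}
    (h : RS par S a b) (ha : a ∈ S) (hb : b ∈ S) :
    ((SimpleGraph.fromRel fun s t => par s = t).induce S).Reachable ⟨a, ha⟩ ⟨b, hb⟩ := by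
  induction h with
  | refl => exact SimpleGraph.Reachable.refl _
  | @tail b c h1 h2 ih =>
    refine (ih h2.1).trans (SimpleGraph.Adj.reachable ?_)
    show ((SimpleGraph.fromRel fun s t => par s = t).induce S).Adj ⟨b, h2.1⟩ ⟨c, h2.2.1⟩
    simp only [SimpleGraph.comap_adj, SimpleGraph.fromRel_adj]
    exact ⟨h2.2.2.1, h2.2.2.2⟩

/-- Connectivity builder: if everything in `S` reaches `r` within `S`, the induced
graph on `S` is connected. -/
lemma connected_of_RS {ι : Type} (par : ι → ι) (S : Set ι) (r : ι) (hr : r ∈ S)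
    (h : ∀ s ∈ S, RS par S s r) :
    ((SimpleGraph.fromRel fun s t => par s = t).induce S).Connected := by
  rw [SimpleGraph.connected_iff]
  refine ⟨?_, ⟨⟨r, hr⟩⟩⟩
  intro a b
  exact (reachable_of_RS (h a.1 a.2) a.2 hr).trans (reachable_of_RS (h b.1 b.2) b.2 hr).symm

/-! ### Walkable components -/

/-- One step of a walk staying inside the vertex set `U`. -/
def wstep (U : Finset V) (a b : V) : Prop := a ∈ U ∧ b ∈ U ∧ G.Adj a b

/-- Reachability inside `U`. -/
def Walkable (U : Finset V) : V → V → Prop := Relation.ReflTransGen (wstep G U)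

lemma Walkable.symm {U : Finset V} {a b : V} (h : Walkable G U a b) : Walkable G U b a :=
  by
  haveI : Std.Symm (wstep G U) := ⟨fun _ _ h => ⟨h.2.1, h.1, h.2.2.symm⟩⟩
  exact Std.Symm.symm (r := Relation.ReflTransGen (wstep G U)) _ _ h

/-- The component of `w` inside `U`. -/
noncomputable def compIn (U : Finset V) (w : V) : Finset V :=
  univ.filter (Walkable G U w)

/-- External neighbourhood, as a finset. -/
noncomputable def NbrF (C : Finset V) : Finset V :=
  univ.filter (fun u => u ∉ C ∧ ∃ c ∈ C, G.Adj u c)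

lemma mem_NbrF {C : Finset V} {u : V} :
    u ∈ NbrF G C ↔ u ∉ C ∧ ∃ c ∈ C, G.Adj u c := by simp [NbrF]

lemma mem_compIn {U : Finset V} {w u : V} : u ∈ compIn G U w ↔ Walkable G U w u := by
  simp [compIn]

lemma self_mem_compIn (U : Finset V) (w : V) : w ∈ compIn G U w :=
  (mem_compIn G).2 Relation.ReflTransGen.refl

lemma compIn_subset {U : Finset V} {w : V} (hw : w ∈ U) : compIn G U w ⊆ U := by
  intro u hu
  rw [mem_compIn] at hu
  induction hu with
  | refl => exact hw
  | tail _ h2 _ => exact h2.2.1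

lemma compIn_closed {U : Finset V} {w a b : V} (hw : w ∈ U) (ha : a ∈ compIn G U w)
    (hb : b ∈ U) (hab : G.Adj a b) : b ∈ compIn G U w := by
  rw [mem_compIn] at ha ⊢
  exact ha.tail ⟨compIn_subset G hw ((mem_compIn G).2 ha), hb, hab⟩

lemma compIn_basepoint {U : Finset V} {w a : V} (ha : a ∈ compIn G U w) :
    compIn G U w = compIn G U a := by
  ext u
  rw [mem_compIn] at ha ⊢
  rw [mem_compIn]
  constructor
  · intro h; exact (Walkable.symm G ha).trans h
  · intro h; exact ha.trans h

lemma compIn_mono {U U' : Finset V} (h : U ⊆ U') (w : V) : compIn G U w ⊆ compIn G U' w := by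
  intro u hu
  rw [mem_compIn] at hu ⊢
  induction hu with
  | refl => exact Relation.ReflTransGen.refl
  | tail _ h2 ih => exact ih.tail ⟨h h2.1, h h2.2.1, h2.2.2⟩

end Aux
section Aux2
set_option linter.unusedSectionVars false
set_option maxHeartbeats 1000000
open Finset
open scoped Classical

variable {V : Type} [Fintype V] [DecidableEq V] {G : SimpleGraph V}

namespace RTDOn

variable (E : RTD V G)

/-- `t` is an ancestor of `s` (iterated parents). -/
def Anc (s t : E.ι) : Prop := ∃ n, E.parent^[n] s = t

lemma anc_refl (t : E.ι) : E.Anc t t := ⟨0, rfl⟩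

lemma anc_parent (t : E.ι) : E.Anc t (E.parent t) := ⟨1, rfl⟩

lemma anc_trans {s t u : E.ι} (h1 : E.Anc s t) (h2 : E.Anc t u) : E.Anc s u := by
  obtain ⟨n, hn⟩ := h1; obtain ⟨m, hm⟩ := h2
  exact ⟨m + n, by rw [Function.iterate_add_apply, hn, hm]⟩

lemma root_iterate (n : ℕ) : E.parent^[n] E.root = E.root := by
  induction n with
  | zero => rfl
  | succ n ih => rw [Function.iterate_succ_apply', ih, E.parent_root]

lemma anc_root (t : E.ι) : E.Anc t E.root := E.reaches_root t

lemma root_anc {t : E.ι} (h : E.Anc E.root t) : t = E.root := by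
  obtain ⟨n, hn⟩ := h; rw [root_iterate] at hn; exact hn.symm

lemma eq_root_of_cycle {t : E.ι} {m : ℕ} (hm : 0 < m) (h : E.parent^[m] t = t) :
    t = E.root := by
  obtain ⟨N, hN⟩ := E.reaches_root t
  have key : ∀ k, E.parent^[k * m] t = t := by
    intro k
    induction k with
    | zero => simp
    | succ k ih => rw [Nat.succ_mul, Function.iterate_add_apply, h, ih]
  have h2 : ∀ j, E.parent^[N + j] t = E.root := by
    intro j
    rw [Nat.add_comm, Function.iterate_add_apply, hN, root_iterate]
  have h3 := key (N + 1)
  have h4 : (N + 1) * m = N + ((N+1) * m - N) := by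
    have : N ≤ (N+1) * m := by nlinarith
    omega
  rw [h4, h2] at h3
  exact h3.symm

lemma anc_antisymm {s t : E.ι} (h1 : E.Anc s t) (h2 : E.Anc t s) : s = t := by
  obtain ⟨n, hn⟩ := h1; obtain ⟨m, hm⟩ := h2
  rcases Nat.eq_zero_or_pos (m + n) with h | h
  · obtain ⟨rfl, rfl⟩ : m = 0 ∧ n = 0 := by omega
    exact hn
  · have hcyc : E.parent^[m + n] s = s := by rw [Function.iterate_add_apply, hn, hm]
    have hs := eq_root_of_cycle E h hcyc
    subst hs
    exact (root_anc E ⟨n, hn⟩).symm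

lemma parent_eq_self {t : E.ι} (h : E.parent t = t) : t = E.root :=
  eq_root_of_cycle E (by norm_num) (show E.parent^[1] t = t from h)

lemma parent_ne {t : E.ι} (h : t ≠ E.root) : E.parent t ≠ t := fun hc => h (parent_eq_self E hc)

/-- Crossing an edge of the tree out of the descendants of `x` identifies the edge. -/
lemma cross_edge {a b x : E.ι}
    (hab : (SimpleGraph.fromRel fun s t => E.parent s = t).Adj a b)
    (ha : E.Anc a x) (hb : ¬ E.Anc b x) : a = x ∧ b = E.parent x := by
  rw [SimpleGraph.fromRel_adj] at hab
  obtain ⟨hne, h | h⟩ := hab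
  · -- parent a = b
    obtain ⟨n, hn⟩ := ha
    cases n with
    | zero =>
      simp only [Function.iterate_zero_apply] at hn
      subst hn
      exact ⟨rfl, h.symm⟩
    | succ n =>
      exfalso
      exact hb ⟨n, by rw [← hn, Function.iterate_succ_apply, h]⟩
  · -- parent b = a
    exact absurd (anc_trans E ⟨1, h⟩ ha) hb

/-- Any walk in an induced subgraph of the tree from inside `Desc x` to outside
must visit `x` and `parent x`. -/
lemma walk_cross {S : Set E.ι} {x : E.ι} :
    ∀ {a b : S} (_ : ((SimpleGraph.fromRel fun s t => E.parent s = t).induce S).Walk a b),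
      E.Anc a.1 x → ¬ E.Anc b.1 x → x ∈ S ∧ E.parent x ∈ S := by
  intro a b w
  induction w with
  | nil => intro h1 h2; exact absurd h1 h2
  | @cons a c b h p ih =>
    intro h1 h2
    by_cases hc : E.Anc c.1 x
    · exact ih hc h2
    · have := cross_edge E (by simpa [SimpleGraph.comap_adj] using h) h1 hc
      refine ⟨this.1 ▸ a.2, this.2 ▸ c.2⟩

/-- The set of nodes whose bag contains `v`. -/
def Region (v : V) : Set E.ι := {t | v ∈ E.bag t}

lemma region_connected (v : V) :
    ((SimpleGraph.fromRel fun s t => E.parent s = t).induce (E.Region v)).Connected :=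
  E.bags_connected v (Finset.mem_univ v)

/-- Separation fact: if `v` appears in a bag below `t` and in a bag not below `t`,
then `v ∈ β(t) ∩ β(parent t)`. -/
lemma sep_fact {v : V} {r s t : E.ι} (hr : v ∈ E.bag r) (hrt : E.Anc r t)
    (hs : v ∈ E.bag s) (hst : ¬ E.Anc s t) :
    v ∈ E.bag t ∧ v ∈ E.bag (E.parent t) := by
  have hconn := (E.region_connected v).preconnected ⟨r, hr⟩ ⟨s, hs⟩
  obtain ⟨w⟩ := hconn
  exact walk_cross E w hrt hst

/-- Depth of a node. -/
noncomputable def depth (t : E.ι) : ℕ := Nat.find (E.reaches_root t)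

lemma depth_spec (t : E.ι) : E.parent^[E.depth t] t = E.root := Nat.find_spec (E.reaches_root t)

lemma depth_parent_lt {t : E.ι} (h : t ≠ E.root) : E.depth (E.parent t) < E.depth t := by
  have h0 : E.depth t ≠ 0 := by
    intro h0
    exact h (by simpa [h0] using E.depth_spec t)
  have hspec : E.parent^[E.depth t - 1] (E.parent t) = E.root := by
    rw [← Function.iterate_succ_apply]
    show E.parent^[E.depth t - 1 + 1] t = E.root
    have h1 : E.depth t - 1 + 1 = E.depth t := by omega
    rw [h1]; exact E.depth_spec t
  have : E.depth (E.parent t) ≤ E.depth t - 1 := Nat.find_le hspec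
  omega

/-- Existence of an apex of the region of `v`: an element of which all region
elements are descendants. -/
lemma apex_exists (v : V) : ∃ a, v ∈ E.bag a ∧ ∀ s, v ∈ E.bag s → E.Anc s a := by
  have hne : (univ.filter (fun t => v ∈ E.bag t)).Nonempty := by
    have := (E.region_connected v).nonempty
    obtain ⟨⟨t, ht⟩⟩ := this
    exact ⟨t, by simpa [Region] using ht⟩
  obtain ⟨a, ha, hmin⟩ := Finset.exists_min_image _ E.depth hne
  simp only [mem_filter, mem_univ, true_and] at ha hmin
  refine ⟨a, ha, fun s hs => ?_⟩
  by_contra hcon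
  have hwalk := (E.region_connected v).preconnected ⟨a, ha⟩ ⟨s, hs⟩
  obtain ⟨w⟩ := hwalk
  have := walk_cross E w (anc_refl E a) hcon
  -- this : a ∈ Region ∧ parent a ∈ Region
  by_cases hroot : a = E.root
  · exact hcon (hroot ▸ anc_root E s)
  · have hlt := E.depth_parent_lt hroot
    have := hmin (E.parent a) this.2
    omega

/-- The apex of `v`'s region. -/
noncomputable def apex (v : V) : E.ι := (E.apex_exists v).choose

lemma apex_mem (v : V) : v ∈ E.bag (E.apex v) := (E.apex_exists v).choose_spec.1

lemma anc_apex {v : V} {s : E.ι} (hs : v ∈ E.bag s) : E.Anc s (E.apex v) :=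
  (E.apex_exists v).choose_spec.2 s hs

/-- Path closure: the bag-region is closed along ancestor paths between two of
its members. -/
lemma region_path {v : V} {s a : E.ι} (hs : v ∈ E.bag s) (ha : v ∈ E.bag a)
    {n : ℕ} (hn : E.parent^[n] s = a) {m : ℕ} (hm : m ≤ n) :
    v ∈ E.bag (E.parent^[m] s) := by
  set x := E.parent^[m] s with hx
  have hsx : E.Anc s x := ⟨m, rfl⟩
  by_cases hax : E.Anc a x
  · have hxa : E.Anc x a := ⟨n - m, by rw [hx, ← Function.iterate_add_apply]; rw [show n - m + m = n by omega]; exact hn⟩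
    rw [anc_antisymm E hxa hax]; exact ha
  · exact (E.sep_fact hs hsx ha hax).1

lemma bag_subset_gamma (t : E.ι) : ∀ v ∈ E.bag t, v ∈ E.gammaSet t :=
  fun v hv => ⟨t, ⟨0, rfl⟩, hv⟩

lemma gamma_mono {t : E.ι} (v : V) (hv : v ∈ E.gammaSet t) : v ∈ E.gammaSet (E.parent t) := by
  obtain ⟨s, hs, hv⟩ := hv
  exact ⟨s, anc_trans E hs (anc_parent E t), hv⟩

/-- If `v ∈ γ(t)` and `v` is in a bag not below `t`, then `v ∈ β(t) ∩ β(parent t)`. -/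
lemma gamma_cross {v : V} {t s : E.ι} (hv : v ∈ E.gammaSet t) (hs : v ∈ E.bag s)
    (hst : ¬ E.Anc s t) : v ∈ E.bag t ∧ v ∈ E.bag (E.parent t) := by
  obtain ⟨r, hr, hvr⟩ := hv
  exact E.sep_fact hvr hr hs hst

/-- Edge separation: edges leaving `γ(t) ∖ σ(t)` stay in `γ(t)`. -/
lemma gamma_edge {u w : V} {t : E.ι} (hu : u ∈ E.gammaSet t)
    (hσ : t = E.root ∨ ¬(u ∈ E.bag t ∧ u ∈ E.bag (E.parent t)))
    (hadj : G.Adj u w) : w ∈ E.gammaSet t := by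
  have hreg : ∀ s, u ∈ E.bag s → E.Anc s t := by
    intro s hsu
    by_contra hcon
    rcases hσ with hroot | hσ
    · exact hcon (hroot ▸ anc_root E s)
    · exact hσ (E.gamma_cross hu hsu hcon)
  obtain ⟨r, hur, hwr⟩ := E.edge_in_bag u (mem_univ u) w (mem_univ w) hadj
  exact ⟨r, hreg r hur, hwr⟩

end RTDOn
end Aux2
section Aux3
set_option linter.unusedSectionVars false
set_option maxHeartbeats 1000000
open Finset
open scoped Classical

variable {V : Type} [Fintype V] [DecidableEq V] {G : SimpleGraph V}

namespace RTDOn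

variable (E : RTD V G)

lemma child_exists {r t : E.ι} (h : E.Anc r t) (hne : r ≠ t) :
    ∃ s, E.parent s = t ∧ s ≠ t ∧ E.Anc r s := by
  have hex : ∃ n, E.parent^[n] r = t := h
  set n := Nat.find hex with hdefn
  have hn : E.parent^[n] r = t := Nat.find_spec hex
  have hn0 : n ≠ 0 := by
    intro h0; apply hne; rw [h0] at hn; simpa using hn
  refine ⟨E.parent^[n-1] r, ?_, ?_, ⟨n-1, rfl⟩⟩
  · have h2 : E.parent^[n] r = t := hn
    rw [show n = (n-1)+1 by omega, Function.iterate_succ_apply'] at h2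
    exact h2
  · intro hc
    have : n ≤ n - 1 := Nat.find_le hc
    omega

lemma child_unique_aux {s s' t r : E.ι} (hs : E.parent s = t) (hs' : E.parent s' = t)
    (hns' : s' ≠ t) {j j' : ℕ} (hj : E.parent^[j] r = s) (hj' : E.parent^[j'] r = s')
    (hle : j ≤ j') : s = s' := by
  have hss' : E.parent^[j'-j] s = s' := by
    rw [← hj, ← Function.iterate_add_apply, show j'-j+j = j' by omega]
    exact hj'
  rcases Nat.eq_zero_or_pos (j'-j) with h0 | h0
  · rw [h0] at hss'; simpa using hss'
  · exfalso
    have h5 : E.parent^[j'-j-1] t = s' := by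
      rw [← hs, ← Function.iterate_succ_apply]
      show E.parent^[(j'-j-1)+1] s = s'
      rw [show (j'-j-1)+1 = j'-j by omega]
      exact hss'
    have hcyc : E.parent^[(j'-j-1)+1] t = t := by
      rw [Function.iterate_succ_apply', h5, hs']
    have hroot : t = E.root := eq_root_of_cycle E (by omega) hcyc
    apply hns'
    rw [← h5, hroot, root_iterate]

lemma child_unique {s s' t r : E.ι} (hs : E.parent s = t) (hs' : E.parent s' = t)
    (hns : s ≠ t) (hns' : s' ≠ t) (h1 : E.Anc r s) (h2 : E.Anc r s') : s = s' := by
  obtain ⟨j, hj⟩ := h1; obtain ⟨j', hj'⟩ := h2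
  rcases le_total j j' with h | h
  · exact child_unique_aux E hs hs' hns' hj hj' h
  · exact (child_unique_aux E hs' hs hns hj' hj h).symm

/-- Key bound: the neighbourhood of any component of `G - β(t)` has size at most the
adhesion of the decomposition. -/
lemma comp_nbr_le {l : ℕ} (hadh : E.adhesionLe l) (t : E.ι) (w : V) (hw : w ∉ E.bag t) :
    (NbrF G (compIn G (univ \ E.bag t) w)).card ≤ l := by
  set U : Finset V := univ \ E.bag t with hU
  set C : Finset V := compIn G U w with hC
  have hwU : w ∈ U := by rw [hU]; simp [hw]
  have hCU : C ⊆ U := compIn_subset G hwU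
  have hCnotbag : ∀ c ∈ C, c ∉ E.bag t := by
    intro c hc hcb
    have := hCU hc; rw [hU, mem_sdiff] at this; exact this.2 hcb
  have nbr_in_bag : ∀ u ∈ NbrF G C, u ∈ E.bag t := by
    intro u hu
    rw [mem_NbrF] at hu
    obtain ⟨hunC, c, hcC, hadj⟩ := hu
    by_contra hub
    have huU : u ∈ U := by rw [hU]; simp [hub]
    exact hunC (compIn_closed G hwU hcC huU hadj.symm)
  by_cases hγ : ∃ c ∈ C, c ∈ E.gammaSet t
  · -- the component lies below `t`, inside a single child `s`
    have hCγ : ∀ c ∈ C, c ∈ E.gammaSet t := by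
      obtain ⟨c₀, hc₀, hγ₀⟩ := hγ
      intro c hc
      have hwalk : Walkable G U c₀ c := by
        have : c ∈ compIn G U c₀ := by rw [← compIn_basepoint G hc₀]; exact hc
        exact (mem_compIn G).1 this
      induction hwalk with
      | refl => exact hγ₀
      | @tail b c' h1 h2 ih =>
        have hbγ : b ∈ E.gammaSet t := ih (by
          rw [hC, compIn_basepoint G hc₀, mem_compIn]; exact h1)
        refine E.gamma_edge hbγ (Or.inr ?_) h2.2.2
        intro hcon
        have : b ∈ U := h2.1
        rw [hU, mem_sdiff] at this
        exact this.2 hcon.1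
    have hwC : w ∈ C := self_mem_compIn G U w
    have hRdesc : ∀ c ∈ C, ∀ r, c ∈ E.bag r → E.Anc r t ∧ r ≠ t := by
      intro c hc r hr
      constructor
      · by_contra hcon
        exact (hCnotbag c hc) (E.gamma_cross (hCγ c hc) hr hcon).1
      · rintro rfl; exact hCnotbag c hc hr
    obtain ⟨r₀, hr₀⟩ : ∃ r, w ∈ E.bag r := by
      obtain ⟨s, _, hs⟩ := hCγ w hwC; exact ⟨s, hs⟩
    obtain ⟨s, hst, hsnet, hr₀s⟩ :=
      child_exists E (hRdesc w hwC r₀ hr₀).1 (hRdesc w hwC r₀ hr₀).2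
    -- all bags containing vertices of C are below s
    have key : ∀ c ∈ C, ∀ r, c ∈ E.bag r → E.Anc r s := by
      have main : ∀ c, Walkable G U w c →
          (∃ r', c ∈ E.bag r' ∧ E.Anc r' s) → ∀ r, c ∈ E.bag r → E.Anc r s := by
        intro c hwalk hex r hr
        obtain ⟨r', hr', hr's⟩ := hex
        by_contra hcon
        have hmem : c ∈ C := by rw [hC, mem_compIn]; exact hwalk
        obtain ⟨wk⟩ := (E.region_connected c).preconnected ⟨r', hr'⟩ ⟨r, hr⟩
        have := walk_cross E wk hr's hcon
        -- s and parent s = t are in the region of c; contradiction with c ∉ β(t)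
        rw [hst] at this
        exact hCnotbag c hmem this.2
      -- find for each c a single witness bag below s, by induction along the walk
      have wit : ∀ c, Walkable G U w c → ∃ r', c ∈ E.bag r' ∧ E.Anc r' s := by
        intro c hwalk
        induction hwalk with
        | refl => exact ⟨r₀, hr₀, hr₀s⟩
        | @tail b c' h1 h2 ih =>
          obtain ⟨rb, hrb, hrbs⟩ := ih
          obtain ⟨re, hbe, hce⟩ := E.edge_in_bag b (mem_univ b) c' (mem_univ c') h2.2.2
          have hres : E.Anc re s := main b h1 ⟨rb, hrb, hrbs⟩ re hbe
          exact ⟨re, hce, hres⟩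
      intro c hc r hr
      have hwalk : Walkable G U w c := (mem_compIn G).1 hc
      exact main c hwalk (wit c hwalk) r hr
    have hnts : ¬ E.Anc t s := by
      intro hc
      exact hsnet (anc_antisymm E ⟨1, hst⟩ hc)
    have hsub : NbrF G C ⊆ E.bag s ∩ E.bag (E.parent s) := by
      intro u hu
      have hubag : u ∈ E.bag t := nbr_in_bag u hu
      rw [mem_NbrF] at hu
      obtain ⟨hunC, c, hcC, hadj⟩ := hu
      obtain ⟨re, hue, hce⟩ := E.edge_in_bag u (mem_univ u) c (mem_univ c) hadj
      have hres : E.Anc re s := key c hcC re hce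
      have := E.sep_fact hue hres hubag hnts
      exact mem_inter.2 this
    have hsroot : s ≠ E.root := by
      intro h
      apply hsnet
      rw [h] at hst ⊢
      rw [← hst, E.parent_root]
    exact le_trans (card_le_card hsub) (hadh s hsroot)
  · -- the component lies above `t`
    push_neg at hγ
    rcases (NbrF G C).eq_empty_or_nonempty with he | ⟨u₀, hu₀⟩
    · simp [he]
    · have ht_root : t ≠ E.root := by
        rw [mem_NbrF] at hu₀
        obtain ⟨_, c, hc, hadj⟩ := hu₀
        obtain ⟨re, _, hce⟩ := E.edge_in_bag u₀ (mem_univ u₀) c (mem_univ c) hadj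
        intro hroot
        exact hγ c hc ⟨re, hroot ▸ anc_root E re, hce⟩
      have hsub : NbrF G C ⊆ E.bag t ∩ E.bag (E.parent t) := by
        intro u hu
        have hut := nbr_in_bag u hu
        rw [mem_NbrF] at hu
        obtain ⟨hunC, c, hc, hadj⟩ := hu
        obtain ⟨re, hue, hce⟩ := E.edge_in_bag u (mem_univ u) c (mem_univ c) hadj
        have hret : ¬ E.Anc re t := fun hanc => hγ c hc ⟨re, hanc, hce⟩
        exact mem_inter.2 (E.sep_fact hut (anc_refl E t) hue hret)
      exact le_trans (card_le_card hsub) (hadh t ht_root)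

end RTDOn
end Aux3
section Aux4
set_option linter.unusedSectionVars false
set_option maxHeartbeats 1000000
open Finset RTDOn
open scoped Classical

variable {V : Type} [Fintype V] [DecidableEq V] {G : SimpleGraph V}

namespace RTDOn

variable (E : RTD V G)

lemma sigma_root : E.sigmaBag E.root = ∅ := by simp [sigmaBag]

lemma mem_sigma {t : E.ι} (h : t ≠ E.root) {v : V} :
    v ∈ E.sigmaBag t ↔ v ∈ E.bag t ∧ v ∈ E.bag (E.parent t) := by
  simp [sigmaBag, h]

lemma sigma_subset_bag (t : E.ι) : E.sigmaBag t ⊆ E.bag t := by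
  by_cases h : t = E.root
  · rw [h, sigma_root]; exact empty_subset _
  · intro v hv; exact ((E.mem_sigma h).1 hv).1

lemma not_anc_parent {t : E.ι} (h : t ≠ E.root) : ¬ E.Anc (E.parent t) t := by
  intro hc
  exact parent_ne E h (anc_antisymm E hc (anc_parent E t))

lemma mem_sigma_of_gamma {t : E.ι} (h : t ≠ E.root) {v : V} (hγ : v ∈ E.gammaSet t)
    (hp : v ∈ E.bag (E.parent t)) : v ∈ E.sigmaBag t := by
  rw [E.mem_sigma h]
  exact ⟨(E.gamma_cross hγ hp (E.not_anc_parent h)).1, hp⟩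

lemma gamma_total (v : V) : v ∈ E.gammaSet E.root :=
  ⟨E.apex v, anc_root E _, E.apex_mem v⟩

lemma depth_eq_zero {t : E.ι} (h : E.depth t = 0) : t = E.root := by
  have := E.depth_spec t; rw [h] at this; simpa using this

end RTDOn

variable (G)

/-- The vertex set `γ(t) \ σ(t)`. -/
noncomputable def Uset (D : RTD V G) (t : D.ι) : Finset V :=
  univ.filter (fun v => v ∈ D.gammaSet t ∧ v ∉ D.sigmaBag t)

variable {G}

lemma mem_Uset {D : RTD V G} {t : D.ι} {v : V} :
    v ∈ Uset G D t ↔ v ∈ D.gammaSet t ∧ v ∉ D.sigmaBag t := by simp [Uset]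

lemma Uset_mono {D : RTD V G} {t : D.ι} (h : t ≠ D.root) :
    Uset G D t ⊆ Uset G D (D.parent t) := by
  intro v hv
  rw [mem_Uset] at hv ⊢
  refine ⟨D.gamma_mono v hv.1, ?_⟩
  intro hσ
  apply hv.2
  exact D.mem_sigma_of_gamma h hv.1 (D.sigma_subset_bag _ hσ)

lemma Uset_root {D : RTD V G} : Uset G D D.root = univ := by
  ext v
  simp only [mem_Uset, mem_univ, iff_true]
  exact ⟨D.gamma_total v, by rw [D.sigma_root]; exact notMem_empty v⟩

lemma walkable_univ (hG : G.Connected) (w u : V) : Walkable G univ w u := by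
  obtain ⟨p⟩ := hG.preconnected w u
  induction p with
  | nil => exact Relation.ReflTransGen.refl
  | @cons a b c h p ih =>
    exact Relation.ReflTransGen.head ⟨mem_univ a, mem_univ b, h⟩ ih

lemma compIn_univ (hG : G.Connected) (w : V) : compIn G univ w = univ := by
  ext u; simp only [mem_compIn, mem_univ, iff_true]
  exact walkable_univ hG w u

variable (G)

/-- Validity of a node of the componentized decomposition. -/
def Valid2 (D : RTD V G) (p : D.ι × Finset V) : Prop :=
  ∃ w ∈ Uset G D p.1, p.2 = compIn G (Uset G D p.1) w

/-- Node type of the componentized decomposition. -/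
def Iota2 (D : RTD V G) : Type := {p : D.ι × Finset V // Valid2 G D p}

noncomputable instance (D : RTD V G) : Fintype (Iota2 G D) := by
  unfold Iota2; infer_instance

noncomputable instance (D : RTD V G) : DecidableEq (Iota2 G D) := by
  unfold Iota2; infer_instance

variable {G}
variable {D : RTD V G}

/-- Basepoint of the component of a node. -/
noncomputable def bp2 (j : Iota2 G D) : V := j.2.choose

lemma bp2_memU (j : Iota2 G D) : bp2 j ∈ Uset G D j.1.1 := j.2.choose_spec.1

lemma comp_eq (j : Iota2 G D) : j.1.2 = compIn G (Uset G D j.1.1) (bp2 j) :=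
  j.2.choose_spec.2

lemma comp_subset_U (j : Iota2 G D) : j.1.2 ⊆ Uset G D j.1.1 := by
  rw [comp_eq j]; exact compIn_subset G (bp2_memU j)

variable (G D)

/-- Parent function of the componentized decomposition. -/
noncomputable def par2 (j : Iota2 G D) : Iota2 G D :=
  if h : j.1.1 = D.root then j
  else ⟨(D.parent j.1.1, compIn G (Uset G D (D.parent j.1.1)) (bp2 j)),
    ⟨bp2 j, Uset_mono h (bp2_memU j), rfl⟩⟩

/-- Bags of the componentized decomposition. -/
noncomputable def bag2 (j : Iota2 G D) : Finset V :=
  (D.bag j.1.1 ∩ j.1.2) ∪ NbrF G j.1.2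

variable {G D}

lemma par2_eq_self {j : Iota2 G D} (h : j.1.1 = D.root) : par2 G D j = j := by
  simp [par2, h]

lemma par2_fst {j : Iota2 G D} (h : j.1.1 ≠ D.root) :
    (par2 G D j).1.1 = D.parent j.1.1 := by
  simp [par2, h]

lemma par2_snd {j : Iota2 G D} (h : j.1.1 ≠ D.root) :
    (par2 G D j).1.2 = compIn G (Uset G D (D.parent j.1.1)) (bp2 j) := by
  simp [par2, h]

lemma comp_subset_parent {j : Iota2 G D} (h : j.1.1 ≠ D.root) :
    j.1.2 ⊆ (par2 G D j).1.2 := by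
  rw [par2_snd h, comp_eq j]
  exact compIn_mono G (Uset_mono h) _

lemma NbrF_sub_sigma (j : Iota2 G D) : NbrF G j.1.2 ⊆ D.sigmaBag j.1.1 := by
  intro u hu
  rw [mem_NbrF] at hu
  obtain ⟨hunC, c, hcC, hadj⟩ := hu
  have hcU := comp_subset_U j hcC
  rw [mem_Uset] at hcU
  have huγ : u ∈ D.gammaSet j.1.1 := by
    refine D.gamma_edge hcU.1 ?_ hadj.symm
    by_cases hroot : j.1.1 = D.root
    · exact Or.inl hroot
    · refine Or.inr (fun hc => hcU.2 ((D.mem_sigma hroot).2 hc))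
  by_contra huσ
  have huU : u ∈ Uset G D j.1.1 := mem_Uset.2 ⟨huγ, huσ⟩
  apply hunC
  rw [comp_eq j] at hcC ⊢
  exact compIn_closed G (bp2_memU j) hcC huU hadj.symm

lemma bag2_subset_bag (j : Iota2 G D) : bag2 G D j ⊆ D.bag j.1.1 := by
  intro u hu
  rcases mem_union.1 hu with h | h
  · exact (mem_inter.1 h).1
  · exact D.sigma_subset_bag _ (NbrF_sub_sigma j h)

lemma mem_comp_not_sigma {j : Iota2 G D} {v : V} (hv : v ∈ j.1.2) :
    v ∉ D.sigmaBag j.1.1 := (mem_Uset.1 (comp_subset_U j hv)).2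

lemma root2_comp {j : Iota2 G D} (hG : G.Connected) (h : j.1.1 = D.root) :
    j.1.2 = univ := by
  have h2 := comp_eq j
  rw [h] at h2
  rw [h2, Uset_root, compIn_univ hG]

variable (G D)

/-- Root of the componentized decomposition. -/
noncomputable def root2 (hG : G.Connected) : Iota2 G D :=
  ⟨(D.root, univ), by
    have : Nonempty V := hG.nonempty
    refine ⟨Classical.arbitrary V, by rw [Uset_root]; exact mem_univ _, ?_⟩
    rw [Uset_root, compIn_univ hG]⟩

variable {G D}

lemma eq_root2 {j : Iota2 G D} (hG : G.Connected) (h : j.1.1 = D.root) :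
    j = root2 G D hG := by
  apply Subtype.ext
  apply Prod.ext h (root2_comp hG h)

variable (G D)

/-- The componentized decomposition `D₂`. -/
noncomputable def D2 (hG : G.Connected) : RTD V G where
  ι := Iota2 G D
  instFintype := inferInstance
  instDecEq := inferInstance
  root := root2 G D hG
  parent := par2 G D
  parent_root := par2_eq_self rfl
  reaches_root := by
    have H : ∀ n (j : Iota2 G D), D.depth j.1.1 ≤ n →
        ∃ m, (par2 G D)^[m] j = root2 G D hG := by
      intro n
      induction n with
      | zero =>
        intro j hd
        have hroot : j.1.1 = D.root := D.depth_eq_zero (Nat.le_zero.1 hd)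
        exact ⟨0, eq_root2 hG hroot⟩
      | succ n ih =>
        intro j hd
        by_cases hroot : j.1.1 = D.root
        · exact ⟨0, eq_root2 hG hroot⟩
        · have hlt := D.depth_parent_lt hroot
          have hd' : D.depth (par2 G D j).1.1 ≤ n := by
            rw [par2_fst hroot]; omega
          obtain ⟨m, hm⟩ := ih (par2 G D j) hd'
          exact ⟨m + 1, by rw [Function.iterate_succ_apply, hm]⟩
    intro j
    exact H (D.depth j.1.1) j le_rfl
  bag := bag2 G D
  bag_subset := fun _ => subset_univ _
  bags_connected := by
    intro v _
    obtain ⟨tA, hvA, hanc⟩ := D.apex_exists v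
    have hvU : v ∈ Uset G D tA := by
      rw [mem_Uset]
      refine ⟨D.bag_subset_gamma _ _ hvA, ?_⟩
      intro hσ
      have ht : tA ≠ D.root := by
        intro h; rw [h, D.sigma_root] at hσ; exact notMem_empty v hσ
      rw [D.mem_sigma ht] at hσ
      exact RTDOn.not_anc_parent D ht (hanc _ hσ.2)
    set jA : Iota2 G D := ⟨(tA, compIn G (Uset G D tA) v), ⟨v, hvU, rfl⟩⟩ with hjA
    have hjAmem : v ∈ bag2 G D jA := by
      apply mem_union_left
      exact mem_inter.2 ⟨hvA, self_mem_compIn G _ v⟩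
    apply connected_of_RS (par2 G D) _ jA hjAmem
    have H : ∀ n (j : Iota2 G D), D.depth j.1.1 ≤ n → v ∈ bag2 G D j →
        RS (par2 G D) {s | v ∈ bag2 G D s} j jA := by
      intro n
      induction n with
      | zero =>
        intro j hd hj
        -- depth 0 means j.1.1 = root; then root = apex
        have hroot : j.1.1 = D.root := D.depth_eq_zero (Nat.le_zero.1 hd)
        have hvt : v ∈ D.bag j.1.1 := bag2_subset_bag j hj
        have htaroot : tA = D.root := by
          have := hanc _ hvt
          rw [hroot] at this
          exact root_anc D this
        have hnot : v ∉ NbrF G j.1.2 := by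
          intro h
          have := NbrF_sub_sigma j h
          rw [hroot, D.sigma_root] at this
          exact notMem_empty v this
        have hvC : v ∈ j.1.2 := by
          rcases mem_union.1 hj with h | h
          · exact (mem_inter.1 h).2
          · exact absurd h hnot
        have hjj : j = jA := by
          apply Subtype.ext
          apply Prod.ext (by rw [hroot]; exact htaroot.symm)
          rw [comp_eq j] at hvC
          show j.1.2 = compIn G (Uset G D tA) v
          rw [comp_eq j, compIn_basepoint G hvC, hroot, htaroot]
        rw [hjj]
        exact Relation.ReflTransGen.refl
      | succ n ih =>
        intro j hd hj
        have hvt : v ∈ D.bag j.1.1 := bag2_subset_bag j hj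
        by_cases hjt : j.1.1 = tA
        · -- j = jA
          have hnot : v ∉ NbrF G j.1.2 := by
            intro h
            have := NbrF_sub_sigma j h
            rw [hjt] at this
            exact (mem_Uset.1 hvU).2 this
          have hvC : v ∈ j.1.2 := by
            rcases mem_union.1 hj with h | h
            · exact (mem_inter.1 h).2
            · exact absurd h hnot
          have hjj : j = jA := by
            apply Subtype.ext
            apply Prod.ext hjt
            rw [comp_eq j] at hvC
            show j.1.2 = compIn G (Uset G D tA) v
            rw [comp_eq j, compIn_basepoint G hvC, hjt]
          rw [hjj]
          exact Relation.ReflTransGen.refl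
        · -- go to the parent
          have htroot : j.1.1 ≠ D.root := by
            intro h
            apply hjt
            have := hanc _ hvt
            rw [h] at this
            rw [root_anc D this, h]
          -- v is in the parent's bag (path towards apex)
          have hvp : v ∈ D.bag (D.parent j.1.1) := by
            obtain ⟨m, hm⟩ := hanc _ hvt
            have hm0 : m ≠ 0 := by
              intro h0; rw [h0] at hm; exact hjt hm
            have := D.region_path hvt hvA hm (m := 1) (by omega)
            simpa using this
          have hstep : v ∈ bag2 G D (par2 G D j) := by
            rcases mem_union.1 hj with h | h
            · -- v ∈ bag ∩ C
              apply mem_union_left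
              rw [par2_fst htroot]
              refine mem_inter.2 ⟨hvp, ?_⟩
              exact comp_subset_parent htroot (mem_inter.1 h).2
            · -- v ∈ NbrF C
              rw [mem_NbrF] at h
              obtain ⟨hvnC, c, hcC, hadj⟩ := h
              have hcC' : c ∈ (par2 G D j).1.2 := comp_subset_parent htroot hcC
              by_cases hvC' : v ∈ (par2 G D j).1.2
              · apply mem_union_left
                rw [par2_fst htroot]
                exact mem_inter.2 ⟨hvp, hvC'⟩
              · exact mem_union_right _ ((mem_NbrF G).2 ⟨hvC', c, hcC', hadj⟩)
          have hne : j ≠ par2 G D j := by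
            intro h
            apply parent_ne D htroot
            have : j.1.1 = (par2 G D j).1.1 := by rw [← h]
            rw [par2_fst htroot] at this
            exact this.symm
          have hd' : D.depth (par2 G D j).1.1 ≤ n := by
            rw [par2_fst htroot]
            have := D.depth_parent_lt htroot
            omega
          have htail := ih (par2 G D j) hd' hstep
          exact Relation.ReflTransGen.head ⟨hj, hstep, hne, Or.inl rfl⟩ htail
    intro j hj
    exact H (D.depth j.1.1) j le_rfl hj
  edge_in_bag := by
    intro u _ v _ hadj
    have hne : (univ.filter (fun t => u ∈ D.bag t ∧ v ∈ D.bag t)).Nonempty := by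
      obtain ⟨t, h1, h2⟩ := D.edge_in_bag u (mem_univ u) v (mem_univ v) hadj
      exact ⟨t, by simp [h1, h2]⟩
    obtain ⟨t, ht, hmin⟩ := exists_min_image _ D.depth hne
    simp only [mem_filter, mem_univ, true_and] at ht hmin
    obtain ⟨hu, hv⟩ := ht
    have huγ : u ∈ D.gammaSet t := D.bag_subset_gamma t u hu
    have hvγ : v ∈ D.gammaSet t := D.bag_subset_gamma t v hv
    by_cases hus : u ∈ D.sigmaBag t <;> by_cases hvs : v ∈ D.sigmaBag t
    · -- both in σ: contradiction with minimality
      exfalso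
      have htroot : t ≠ D.root := by
        intro h; rw [h, D.sigma_root] at hus; exact notMem_empty u hus
      have h1 := ((D.mem_sigma htroot).1 hus).2
      have h2 := ((D.mem_sigma htroot).1 hvs).2
      have := hmin (D.parent t) ⟨h1, h2⟩
      have := D.depth_parent_lt htroot
      omega
    · -- u ∈ σ, v ∉ σ
      have hvU : v ∈ Uset G D t := mem_Uset.2 ⟨hvγ, hvs⟩
      refine ⟨⟨(t, compIn G (Uset G D t) v), ⟨v, hvU, rfl⟩⟩, ?_, ?_⟩
      · -- u ∈ bag2 : u ∈ NbrF C
        apply mem_union_right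
        refine (mem_NbrF G).2 ⟨?_, v, self_mem_compIn G _ v, hadj⟩
        intro hc
        exact (mem_Uset.1 (compIn_subset G hvU hc)).2 hus
      · apply mem_union_left
        exact mem_inter.2 ⟨hv, self_mem_compIn G _ v⟩
    · -- v ∈ σ, u ∉ σ
      have huU : u ∈ Uset G D t := mem_Uset.2 ⟨huγ, hus⟩
      refine ⟨⟨(t, compIn G (Uset G D t) u), ⟨u, huU, rfl⟩⟩, ?_, ?_⟩
      · apply mem_union_left
        exact mem_inter.2 ⟨hu, self_mem_compIn G _ u⟩
      · apply mem_union_right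
        refine (mem_NbrF G).2 ⟨?_, u, self_mem_compIn G _ u, hadj.symm⟩
        intro hc
        exact (mem_Uset.1 (compIn_subset G huU hc)).2 hvs
    · -- neither in σ
      have huU : u ∈ Uset G D t := mem_Uset.2 ⟨huγ, hus⟩
      have hvU : v ∈ Uset G D t := mem_Uset.2 ⟨hvγ, hvs⟩
      refine ⟨⟨(t, compIn G (Uset G D t) u), ⟨u, huU, rfl⟩⟩, ?_, ?_⟩
      · apply mem_union_left
        exact mem_inter.2 ⟨hu, self_mem_compIn G _ u⟩
      · apply mem_union_left
        exact mem_inter.2 ⟨hv, compIn_closed G huU (self_mem_compIn G _ u) hvU hadj⟩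

variable {G D}
lemma sigma2_sub_NbrF {j : Iota2 G D} (htroot : j.1.1 ≠ D.root) :
    bag2 G D j ∩ bag2 G D (par2 G D j) ⊆ NbrF G j.1.2 := by
  intro v hv
  obtain ⟨h1, h2⟩ := mem_inter.1 hv
  rcases mem_union.1 h1 with h | h
  · exfalso
    have hvC : v ∈ j.1.2 := (mem_inter.1 h).2
    have hvns : v ∉ D.sigmaBag j.1.1 := mem_comp_not_sigma hvC
    rcases mem_union.1 h2 with h' | h'
    · have hvp : v ∈ D.bag (D.parent j.1.1) := by
        rw [par2_fst htroot] at h'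
        exact (mem_inter.1 h').1
      have hvγ : v ∈ D.gammaSet j.1.1 := (mem_Uset.1 (comp_subset_U j hvC)).1
      exact hvns (D.mem_sigma_of_gamma htroot hvγ hvp)
    · exact ((mem_NbrF G).1 h').1 (comp_subset_parent htroot hvC)
  · exact h

lemma comp_disj_parent_bag {j : Iota2 G D} (htroot : j.1.1 ≠ D.root) :
    ∀ c ∈ j.1.2, c ∉ bag2 G D (par2 G D j) := by
  intro c hc hcb
  rcases mem_union.1 hcb with h | h
  · have hcp : c ∈ D.bag (D.parent j.1.1) := by
      rw [par2_fst htroot] at h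
      exact (mem_inter.1 h).1
    have hcγ : c ∈ D.gammaSet j.1.1 := (mem_Uset.1 (comp_subset_U j hc)).1
    exact (mem_comp_not_sigma hc) (D.mem_sigma_of_gamma htroot hcγ hcp)
  · exact ((mem_NbrF G).1 h).1 (comp_subset_parent htroot hc)

lemma D2_adhesion {l : ℕ} (hG : G.Connected) (ha : D.adhesionLe l) :
    (D2 G D hG).adhesionLe l := by
  intro j hj
  have htroot : j.1.1 ≠ D.root := fun h => hj (eq_root2 hG h)
  show (bag2 G D j ∩ bag2 G D (par2 G D j)).card ≤ l
  have hsub := (sigma2_sub_NbrF htroot).trans (NbrF_sub_sigma j)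
  refine le_trans (card_le_card hsub) ?_
  rw [RTDOn.sigmaBag, if_neg htroot]
  exact ha j.1.1 htroot

/-- The attachment property: the adhesion of a non-root node of `D₂` is contained in
the neighbourhood of a single component of `G` minus the parent's bag. -/
lemma D2_attach (hG : G.Connected) {j : Iota2 G D} (hj : j ≠ root2 G D hG) :
    ∃ w, w ∉ bag2 G D (par2 G D j) ∧
      (bag2 G D j ∩ bag2 G D (par2 G D j)) ⊆
        NbrF G (compIn G (univ \ bag2 G D (par2 G D j)) w) := by
  have htroot : j.1.1 ≠ D.root := fun h => hj (eq_root2 hG h)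
  have hbpC : bp2 j ∈ j.1.2 := by
    rw [comp_eq j]; exact self_mem_compIn G _ _
  have hCdisj := comp_disj_parent_bag htroot
  have hCsubU' : ∀ c ∈ j.1.2, c ∈ univ \ bag2 G D (par2 G D j) :=
    fun c hc => mem_sdiff.2 ⟨mem_univ c, hCdisj c hc⟩
  refine ⟨bp2 j, hCdisj _ hbpC, ?_⟩
  have hCQ : ∀ c, Walkable G (Uset G D j.1.1) (bp2 j) c →
      Walkable G (univ \ bag2 G D (par2 G D j)) (bp2 j) c := by
    intro c hwk
    induction hwk with
    | refl => exact Relation.ReflTransGen.refl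
    | @tail b c' h1 h2 ih =>
      have hbC : b ∈ j.1.2 := by rw [comp_eq j, mem_compIn]; exact h1
      have hcC : c' ∈ j.1.2 := by rw [comp_eq j, mem_compIn]; exact h1.tail h2
      exact ih.tail ⟨hCsubU' b hbC, hCsubU' c' hcC, h2.2.2⟩
  intro u hu
  have huN : u ∈ NbrF G j.1.2 := sigma2_sub_NbrF htroot hu
  rw [mem_NbrF] at huN
  obtain ⟨hunC, c, hc, hadj⟩ := huN
  have hubag : u ∈ bag2 G D (par2 G D j) := (mem_inter.1 hu).2
  refine (mem_NbrF G).2 ⟨?_, c, ?_, hadj⟩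
  · intro huQ
    have := compIn_subset G (hCsubU' _ hbpC) huQ
    rw [mem_sdiff] at this
    exact this.2 hubag
  · rw [mem_compIn]
    apply hCQ c
    rw [comp_eq j] at hc
    exact (mem_compIn G).1 hc
end Aux4
section Aux5
set_option linter.unusedSectionVars false
set_option maxHeartbeats 1000000
open Finset RTDOn
open scoped Classical

variable {V : Type} [Fintype V] [DecidableEq V] {G : SimpleGraph V}

variable (E F : RTD V G)

/-- Attachment point of the copy of `j` inside the copy of its parent. -/
noncomputable def gpt (j : E.ι) : F.ι :=
  if j = E.root then F.root
  else if h : ∃ w, w ∉ E.bag (E.parent j) ∧ (E.bag j ∩ E.bag (E.parent j)) ⊆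
      NbrF G (compIn G (univ \ E.bag (E.parent j)) w)
    then F.apex h.choose else F.root

/-- Parent function of the product decomposition. -/
noncomputable def par3 (p : E.ι × F.ι) : E.ι × F.ι :=
  if p.2 = F.root then (E.parent p.1, gpt E F p.1) else (p.1, F.parent p.2)

/-- Bags of the product decomposition. -/
noncomputable def bag3 (p : E.ι × F.ι) : Finset V :=
  (F.bag p.2 ∩ E.bag p.1) ∪ E.sigmaBag p.1 ∪
    (F.bag p.2 \ E.bag p.1).biUnion (fun w => NbrF G (compIn G (univ \ E.bag p.1) w))

variable {E F}

lemma NbrF_compIn_subset {X : Finset V} {w : V} (hw : w ∉ X) :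
    NbrF G (compIn G (univ \ X) w) ⊆ X := by
  intro u hu
  rw [mem_NbrF] at hu
  obtain ⟨hunC, c, hc, hadj⟩ := hu
  by_contra hux
  have hwU : w ∈ univ \ X := mem_sdiff.2 ⟨mem_univ w, hw⟩
  exact hunC (compIn_closed G hwU hc (mem_sdiff.2 ⟨mem_univ u, hux⟩) hadj.symm)

lemma bag3_subset (p : E.ι × F.ι) : bag3 E F p ⊆ E.bag p.1 := by
  intro u hu
  rcases mem_union.1 hu with h | h
  · rcases mem_union.1 h with h' | h'
    · exact (mem_inter.1 h').2
    · exact E.sigma_subset_bag _ h'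
  · obtain ⟨w, hw, hu'⟩ := mem_biUnion.1 h
    exact NbrF_compIn_subset (mem_sdiff.1 hw).2 hu'

lemma bag3_card {k l : ℕ} (hkF : ∀ x, (F.bag x).card ≤ k) (hadh : E.adhesionLe l)
    (hl : 1 ≤ l) (p : E.ι × F.ι) : (bag3 E F p).card ≤ (k + 1) * l := by
  have hσ : (E.sigmaBag p.1).card ≤ l := by
    by_cases h : p.1 = E.root
    · rw [h, E.sigma_root]; simp
    · rw [RTDOn.sigmaBag, if_neg h]; exact hadh p.1 h
  have hbi : ((F.bag p.2 \ E.bag p.1).biUnion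
      (fun w => NbrF G (compIn G (univ \ E.bag p.1) w))).card
        ≤ (F.bag p.2 \ E.bag p.1).card * l := by
    apply card_biUnion_le_card_mul
    intro w hw
    exact comp_nbr_le E hadh p.1 w (mem_sdiff.1 hw).2
  have hab : (F.bag p.2 ∩ E.bag p.1).card + (F.bag p.2 \ E.bag p.1).card ≤ k := by
    rw [card_inter_add_card_sdiff]
    exact hkF p.2
  calc (bag3 E F p).card
      ≤ ((F.bag p.2 ∩ E.bag p.1) ∪ E.sigmaBag p.1).card +
          ((F.bag p.2 \ E.bag p.1).biUnion
            (fun w => NbrF G (compIn G (univ \ E.bag p.1) w))).card := card_union_le _ _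
    _ ≤ (F.bag p.2 ∩ E.bag p.1).card + (E.sigmaBag p.1).card +
          (F.bag p.2 \ E.bag p.1).card * l := by
        have := card_union_le (F.bag p.2 ∩ E.bag p.1) (E.sigmaBag p.1)
        omega
    _ ≤ (k + 1) * l := by nlinarith [hab, hσ, hl]

/-- The attachment hypothesis for `E`. -/
def AttachOK : Prop :=
  ∀ j : E.ι, j ≠ E.root → ∃ w, w ∉ E.bag (E.parent j) ∧
    (E.bag j ∩ E.bag (E.parent j)) ⊆ NbrF G (compIn G (univ \ E.bag (E.parent j)) w)

lemma jump_mem (hatt : AttachOK (E := E)) {v : V} {j : E.ι} (hj : j ≠ E.root)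
    (hv : v ∈ E.sigmaBag j) : v ∈ bag3 E F (E.parent j, gpt E F j) := by
  have hex := hatt j hj
  have hgpt : gpt E F j = F.apex hex.choose := by
    rw [gpt, if_neg hj, dif_pos hex]
  obtain ⟨hw1, hw2⟩ := hex.choose_spec
  rw [hgpt]
  apply mem_union_right
  apply mem_biUnion.2
  refine ⟨hex.choose, mem_sdiff.2 ⟨F.apex_mem _, hw1⟩, ?_⟩
  apply hw2
  rw [E.mem_sigma hj] at hv
  exact mem_inter.2 hv

/-- Lifting an ancestor path in `F` to the product tree inside a fixed copy. -/
lemma lift_iter (S : Set (E.ι × F.ι)) (j : E.ι) :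
    ∀ (n : ℕ) (x : F.ι), (∀ m, m ≤ n → (j, F.parent^[m] x) ∈ S) →
      RS (par3 E F) S (j, x) (j, F.parent^[n] x) := by
  intro n
  induction n with
  | zero => intro x _; exact Relation.ReflTransGen.refl
  | succ n ih =>
    intro x hm
    by_cases hx : x = F.root
    · have hall : F.parent^[n+1] x = x := by rw [hx, root_iterate]
      rw [hall]
      exact Relation.ReflTransGen.refl
    · have hstep : par3 E F (j, x) = (j, F.parent x) := by
        rw [par3, if_neg hx]
      have h1 := ih (F.parent x) (fun m hm' => by
        rw [← Function.iterate_succ_apply]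
        exact hm (m+1) (by omega))
      have hne : (j, x) ≠ (j, F.parent x) := by
        intro h
        exact parent_ne F hx (congrArg Prod.snd h).symm
      have hmem0 : (j, x) ∈ S := by simpa using hm 0 (by omega)
      have hmem1 : (j, F.parent x) ∈ S := by
        have := hm 1 (by omega); simpa using this
      rw [Function.iterate_succ_apply]
      exact Relation.ReflTransGen.head ⟨hmem0, hmem1, hne, Or.inl hstep⟩ h1

/-- Moving within the copy of `j` along the `F`-region of a vertex `u`. -/
lemma region_hop (S : Set (E.ι × F.ι)) (j : E.ι) {u : V}
    (hall : ∀ x, u ∈ F.bag x → (j, x) ∈ S)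
    {x y : F.ι} (hx : u ∈ F.bag x) (hy : u ∈ F.bag y) :
    RS (par3 E F) S (j, x) (j, y) := by
  have hhalf : ∀ z : F.ι, u ∈ F.bag z → RS (par3 E F) S (j, z) (j, F.apex u) := by
    intro z hz
    obtain ⟨n, hn⟩ := F.anc_apex hz
    have := lift_iter S j n z (fun m hm => hall _ (F.region_path hz (F.apex_mem u) hn hm))
    rwa [hn] at this
  exact (hhalf x hx).trans (hhalf y hy).symm

/-- Reaching the apex column from anywhere in the region of a component attached to
the apex copy. -/
lemma comp_region_reach (S : Set (E.ι × F.ι)) (jA : E.ι) (v : V)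
    (hSv : ∀ x, v ∈ F.bag x → (jA, x) ∈ S)
    {w : V} (hw : w ∉ E.bag jA)
    (hv : v ∈ NbrF G (compIn G (univ \ E.bag jA) w))
    (hall : ∀ c ∈ compIn G (univ \ E.bag jA) w, ∀ x, c ∈ F.bag x → (jA, x) ∈ S) :
    ∀ c ∈ compIn G (univ \ E.bag jA) w, ∀ x, c ∈ F.bag x →
      RS (par3 E F) S (jA, x) (jA, F.apex v) := by
  set U : Finset V := univ \ E.bag jA with hU
  set Q : Finset V := compIn G U w with hQ
  rw [mem_NbrF] at hv
  obtain ⟨hvnQ, u₀, hu₀Q, hadj⟩ := hv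
  have hbase : ∀ x, u₀ ∈ F.bag x → RS (par3 E F) S (jA, x) (jA, F.apex v) := by
    intro x hx
    obtain ⟨y, hvy, hu₀y⟩ := F.edge_in_bag v (mem_univ v) u₀ (mem_univ u₀) hadj
    have h1 : RS (par3 E F) S (jA, x) (jA, y) :=
      region_hop S jA (fun z hz => hall u₀ hu₀Q z hz) hx hu₀y
    have h2 : RS (par3 E F) S (jA, y) (jA, F.apex v) :=
      region_hop S jA hSv hvy (F.apex_mem v)
    exact h1.trans h2
  have main : ∀ c, Walkable G U u₀ c → ∀ x, c ∈ F.bag x →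
      RS (par3 E F) S (jA, x) (jA, F.apex v) := by
    intro c hwk
    induction hwk with
    | refl => exact hbase
    | @tail b c' h1 h2 ih =>
      intro x hx
      have hbQ : b ∈ Q := by
        rw [hQ, compIn_basepoint G hu₀Q, mem_compIn]
        exact h1
      have hc'Q : c' ∈ Q := by
        rw [hQ, compIn_basepoint G hu₀Q, mem_compIn]
        exact h1.tail h2
      obtain ⟨y, hby, hc'y⟩ := F.edge_in_bag b (mem_univ b) c' (mem_univ c') h2.2.2
      have hop : RS (par3 E F) S (jA, x) (jA, y) :=
        region_hop S jA (fun z hz => hall c' hc'Q z hz) hx hc'y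
      exact hop.trans (ih y hby)
  intro c hc x hx
  have : Walkable G U u₀ c := by
    rw [hQ, compIn_basepoint G hu₀Q] at hc
    exact (mem_compIn G).1 hc
  exact main c this x hx

variable (E F)

/-- The final product decomposition. -/
noncomputable def D3 (hatt : AttachOK (E := E)) : RTD V G where
  ι := E.ι × F.ι
  instFintype := inferInstance
  instDecEq := inferInstance
  root := (E.root, F.root)
  parent := par3 E F
  parent_root := by
    rw [par3, if_pos rfl, E.parent_root, gpt, if_pos rfl]
  reaches_root := by
    have A : ∀ (n : ℕ) (x : F.ι) (j : E.ι), F.parent^[n] x = F.root →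
        ∃ m, (par3 E F)^[m] (j, x) = (j, F.root) := by
      intro n
      induction n with
      | zero =>
        intro x j h
        exact ⟨0, by simp only [Function.iterate_zero_apply] at h ⊢; rw [h]⟩
      | succ n ih =>
        intro x j h
        by_cases hx : x = F.root
        · exact ⟨0, by rw [hx]; rfl⟩
        · have hstep : par3 E F (j, x) = (j, F.parent x) := by rw [par3, if_neg hx]
          obtain ⟨m, hm⟩ := ih (F.parent x) j (by
            rw [← Function.iterate_succ_apply]; exact h)
          exact ⟨m + 1, by rw [Function.iterate_succ_apply, hstep, hm]⟩
    have B : ∀ (n : ℕ) (j : E.ι), E.depth j ≤ n →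
        ∃ m, (par3 E F)^[m] (j, F.root) = (E.root, F.root) := by
      intro n
      induction n with
      | zero =>
        intro j h
        have : j = E.root := E.depth_eq_zero (Nat.le_zero.1 h)
        exact ⟨0, by rw [this]; rfl⟩
      | succ n ih =>
        intro j h
        by_cases hj : j = E.root
        · exact ⟨0, by rw [hj]; rfl⟩
        · have hstep : par3 E F (j, F.root) = (E.parent j, gpt E F j) := by
            rw [par3, if_pos rfl]
          obtain ⟨n₀, hn₀⟩ := F.reaches_root (gpt E F j)
          obtain ⟨m1, hm1⟩ := A n₀ (gpt E F j) (E.parent j) hn₀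
          have hd : E.depth (E.parent j) ≤ n := by
            have := E.depth_parent_lt hj; omega
          obtain ⟨m2, hm2⟩ := ih (E.parent j) hd
          refine ⟨m2 + (m1 + 1), ?_⟩
          rw [Function.iterate_add_apply]
          rw [Function.iterate_succ_apply, hstep, hm1, hm2]
    intro p
    obtain ⟨n₀, hn₀⟩ := F.reaches_root p.2
    obtain ⟨m1, hm1⟩ := A n₀ p.2 p.1 hn₀
    obtain ⟨m2, hm2⟩ := B (E.depth p.1) p.1 le_rfl
    refine ⟨m2 + m1, ?_⟩
    rw [Function.iterate_add_apply, hm1, hm2]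
  bag := bag3 E F
  bag_subset := fun _ => subset_univ _
  edge_in_bag := by
    intro u _ v _ hadj
    obtain ⟨j, hu1, hv1⟩ := E.edge_in_bag u (mem_univ u) v (mem_univ v) hadj
    obtain ⟨x, hu2, hv2⟩ := F.edge_in_bag u (mem_univ u) v (mem_univ v) hadj
    refine ⟨(j, x), ?_, ?_⟩
    · exact mem_union_left _ (mem_union_left _ (mem_inter.2 ⟨hu2, hu1⟩))
    · exact mem_union_left _ (mem_union_left _ (mem_inter.2 ⟨hv2, hv1⟩))
  bags_connected := by
    intro v _
    set S : Set (E.ι × F.ι) := {p | v ∈ bag3 E F p} with hS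
    obtain ⟨jA, hvjA, hancE⟩ := E.apex_exists v
    have htarget : (jA, F.apex v) ∈ S := by
      show v ∈ bag3 E F (jA, F.apex v)
      exact mem_union_left _ (mem_union_left _ (mem_inter.2 ⟨F.apex_mem v, hvjA⟩))
    apply connected_of_RS (par3 E F) S (jA, F.apex v) htarget
    have hvsig : v ∉ E.sigmaBag jA := by
      intro hσ
      by_cases h : jA = E.root
      · rw [h, E.sigma_root] at hσ; exact notMem_empty v hσ
      · rw [E.mem_sigma h] at hσ
        exact RTDOn.not_anc_parent E h (hancE _ hσ.2)
    have hSv : ∀ x, v ∈ F.bag x → (jA, x) ∈ S := by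
      intro x hx
      exact mem_union_left _ (mem_union_left _ (mem_inter.2 ⟨hx, hvjA⟩))
    have hXA : ∀ x, (jA, x) ∈ S → RS (par3 E F) S (jA, x) (jA, F.apex v) := by
      intro x hx
      have hx' : v ∈ bag3 E F (jA, x) := hx
      rcases mem_union.1 hx' with h | h
      · rcases mem_union.1 h with h' | h'
        · exact region_hop S jA hSv (mem_inter.1 h').1 (F.apex_mem v)
        · exact absurd h' hvsig
      · obtain ⟨w, hw, hvN⟩ := mem_biUnion.1 h
        obtain ⟨hwx, hwb⟩ := mem_sdiff.1 hw
        have hwU : w ∈ univ \ E.bag jA := mem_sdiff.2 ⟨mem_univ w, hwb⟩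
        have hall : ∀ c ∈ compIn G (univ \ E.bag jA) w, ∀ y, c ∈ F.bag y → (jA, y) ∈ S := by
          intro c hc y hcy
          have hcnb : c ∉ E.bag jA := by
            have := compIn_subset G hwU hc
            exact (mem_sdiff.1 this).2
          show v ∈ bag3 E F (jA, y)
          apply mem_union_right
          apply mem_biUnion.2
          refine ⟨c, mem_sdiff.2 ⟨hcy, hcnb⟩, ?_⟩
          rwa [← compIn_basepoint G hc]
        exact comp_region_reach S jA v hSv hwb hvN hall w
          (self_mem_compIn G _ w) x hwx
    have master : ∀ (n : ℕ) (p : E.ι × F.ι), E.depth p.1 ≤ n → p ∈ S →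
        RS (par3 E F) S p (jA, F.apex v) := by
      intro n
      induction n with
      | zero =>
        intro p hd hp
        have hvj : v ∈ E.bag p.1 := bag3_subset p hp
        have hroot : p.1 = E.root := E.depth_eq_zero (Nat.le_zero.1 hd)
        have hjA : p.1 = jA := by
          have := hancE _ hvj
          rw [hroot] at this
          rw [hroot, root_anc E this]
        obtain ⟨j, x⟩ := p
        simp only at hjA
        subst hjA
        exact hXA x hp
      | succ n ih =>
        intro p hd hp
        have hvj : v ∈ E.bag p.1 := bag3_subset p hp
        by_cases hjA : p.1 = jA
        · obtain ⟨j, x⟩ := p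
          simp only at hjA
          subst hjA
          exact hXA x hp
        · have hjroot : p.1 ≠ E.root := by
            intro h
            apply hjA
            have := hancE _ hvj
            rw [h] at this
            rw [h, root_anc E this]
          have hvp : v ∈ E.bag (E.parent p.1) := by
            obtain ⟨m, hm⟩ := hancE _ hvj
            have hm0 : m ≠ 0 := by
              intro h0; rw [h0] at hm; exact hjA hm
            have := E.region_path hvj hvjA hm (m := 1) (by omega)
            simpa using this
          have hsig : v ∈ E.sigmaBag p.1 := (E.mem_sigma hjroot).2 ⟨hvj, hvp⟩
          have hcopy : ∀ y : F.ι, (p.1, y) ∈ S := by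
            intro y
            show v ∈ bag3 E F (p.1, y)
            exact mem_union_left _ (mem_union_right _ hsig)
          -- walk down to the root column of this copy
          obtain ⟨n₀, hn₀⟩ := F.reaches_root p.2
          have h1 : RS (par3 E F) S (p.1, p.2) (p.1, F.root) := by
            have := lift_iter S p.1 n₀ p.2 (fun m _ => hcopy _)
            rwa [hn₀] at this
          -- jump to the parent copy
          have hjmem : (E.parent p.1, gpt E F p.1) ∈ S := jump_mem hatt hjroot hsig
          have hstep : par3 E F (p.1, F.root) = (E.parent p.1, gpt E F p.1) := by
            rw [par3, if_pos rfl]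
          have hne : (p.1, F.root) ≠ (E.parent p.1, gpt E F p.1) := by
            intro h
            exact parent_ne E hjroot (congrArg Prod.fst h).symm
          have h2 : RS (par3 E F) S (p.1, F.root) (E.parent p.1, gpt E F p.1) :=
            Relation.ReflTransGen.single ⟨hcopy _, hjmem, hne, Or.inl hstep⟩
          have hd' : E.depth (E.parent p.1) ≤ n := by
            have := E.depth_parent_lt hjroot; omega
          have h3 := ih (E.parent p.1, gpt E F p.1) hd' hjmem
          exact (h1.trans h2).trans h3
    intro p hp
    exact master (E.depth p.1) p le_rfl hp

variable {E F}
end Aux5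
section Aux6
set_option linter.unusedSectionVars false
set_option maxHeartbeats 1000000
open Finset RTDOn
open scoped Classical

variable {V : Type} [Fintype V] [DecidableEq V]

/-- The one-node tree decomposition. -/
noncomputable def trivRTD (G : SimpleGraph V) : RTD V G where
  ι := Unit
  instFintype := inferInstance
  instDecEq := inferInstance
  root := ()
  parent := fun _ => ()
  parent_root := rfl
  reaches_root := fun _ => ⟨0, rfl⟩
  bag := fun _ => univ
  bag_subset := fun _ => subset_rfl
  bags_connected := by
    intro v _
    rw [SimpleGraph.connected_iff]
    constructor
    · intro a b
      have : a = b := Subsingleton.elim a b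
      rw [this]
    · exact ⟨⟨(), mem_univ v⟩⟩
  edge_in_bag := fun u _ v _ _ => ⟨(), mem_univ u, mem_univ v⟩

lemma trivRTD_width (G : SimpleGraph V) : (trivRTD G).widthLe (Fintype.card V - 1) := by
  intro t
  show (univ : Finset V).card ≤ Fintype.card V - 1 + 1
  rw [card_univ]
  omega

end Aux6
/-- If `ℬ` captures a tree decomposition of a connected graph `G` of
treewidth `< k`, with width at most `k'` and adhesion width at most `ℓ` (`k ≤ ℓ ≤ k'`),
then `ℬ^{≤(k+1)ℓ}` captures some tree decomposition of width at most `(k+1)ℓ − 1`. -/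
theorem stmt4 {V : Type} [Fintype V] [DecidableEq V] (G : SimpleGraph V)
    (k k' l : ℕ) (hG : G.Connected) (htw : treewidth G < k)
    (hkl : k ≤ l) (hlk : l ≤ k')
    (ℬ : Finset (Finset V)) (D : RTD V G)
    (hcap : D.captures ℬ) (hw : D.widthLe k') (ha : D.adhesionLe l) :
    ∃ D' : RTD V G, D'.captures (belowFam ℬ ((k + 1) * l)) ∧
      D'.widthLe ((k + 1) * l - 1) := by
  classical
  open Finset RTDOn in
  -- extract an optimal-width decomposition
  have hSne : {w : ℕ | ∃ E : RTD V G, E.widthLe w}.Nonempty :=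
    ⟨Fintype.card V - 1, trivRTD G, trivRTD_width G⟩
  have hmem : treewidth G ∈ {w : ℕ | ∃ E : RTD V G, E.widthLe w} := by
    rw [treewidth]
    exact Nat.sInf_mem hSne
  obtain ⟨F, hF⟩ := hmem
  have hkF : ∀ x, (F.bag x).card ≤ k := by
    intro x
    have := hF x
    omega
  have hk1 : 1 ≤ k := by
    omega
  have hl1 : 1 ≤ l := le_trans hk1 hkl
  -- the componentized decomposition
  set E := D2 G D hG with hE
  have hadh2 : E.adhesionLe l := D2_adhesion hG ha
  have hatt : AttachOK (E := E) := by
    intro j hj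
    exact D2_attach hG hj
  refine ⟨D3 E F hatt, ?_, ?_⟩
  · -- captures
    intro p
    show bag3 E F p ∈ belowFam ℬ ((k + 1) * l)
    rw [belowFam, mem_filter]
    refine ⟨mem_univ _, bag3_card hkF hadh2 hl1 p, ?_⟩
    refine ⟨D.bag p.1.1.1, hcap _, ?_⟩
    exact (bag3_subset p).trans (bag2_subset_bag p.1)
  · -- width
    intro p
    show (bag3 E F p).card ≤ (k + 1) * l - 1 + 1
    have h1 : 1 ≤ (k + 1) * l := by nlinarith
    have := bag3_card hkF hadh2 hl1 p
    omega
end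

section
/- If a finite connected graph G admits a rooted tree decomposition (T,β) of width k and adhesion width ℓ, then G also admits a connectivity-sensitive rooted tree decomposition (T',β') of width at most k and adhesion width at most ℓ such that every bag of (T',β') is a subset of some bag of (T,β). -/
open Classical
set_option linter.unusedSectionVars false

namespace Stmt6Aux

variable {V : Type} [Fintype V] [DecidableEq V] {G : SimpleGraph V}

/-- Reachability within a vertex set. -/
def ReachIn (G : SimpleGraph V) (s : Set V) (u v : V) : Prop :=
  ∃ w : G.Walk u v, ∀ x ∈ w.support, x ∈ s

lemma ReachIn.mem_left {s : Set V} {u v : V} (h : ReachIn G s u v) : u ∈ s := by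
  obtain ⟨w, hw⟩ := h; exact hw u w.start_mem_support

lemma ReachIn.mem_right {s : Set V} {u v : V} (h : ReachIn G s u v) : v ∈ s := by
  obtain ⟨w, hw⟩ := h; exact hw v w.end_mem_support

lemma ReachIn.refl {s : Set V} {u : V} (h : u ∈ s) : ReachIn G s u u :=
  ⟨SimpleGraph.Walk.nil, by simp [h]⟩

lemma ReachIn.symm {s : Set V} {u v : V} (h : ReachIn G s u v) : ReachIn G s v u := by
  obtain ⟨w, hw⟩ := h
  exact ⟨w.reverse, fun x hx => hw x (by simpa using hx)⟩

lemma ReachIn.trans {s : Set V} {u v x : V} (h : ReachIn G s u v) (h' : ReachIn G s v x) :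
    ReachIn G s u x := by
  obtain ⟨w, hw⟩ := h; obtain ⟨w', hw'⟩ := h'
  refine ⟨w.append w', fun y hy => ?_⟩
  rw [SimpleGraph.Walk.mem_support_append_iff] at hy
  exact hy.elim (hw y) (hw' y)

lemma ReachIn.mono {s s' : Set V} (hss : s ⊆ s') {u v : V} (h : ReachIn G s u v) :
    ReachIn G s' u v := by
  obtain ⟨w, hw⟩ := h; exact ⟨w, fun x hx => hss (hw x hx)⟩

lemma ReachIn.concat {s : Set V} {u v x : V} (h : ReachIn G s u v) (hadj : G.Adj v x)
    (hx : x ∈ s) : ReachIn G s u x := by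
  obtain ⟨w, hw⟩ := h
  refine ⟨w.concat hadj, fun y hy => ?_⟩
  rw [SimpleGraph.Walk.support_concat, List.mem_append] at hy
  rcases hy with hy | hy
  · exact hw y hy
  · simp at hy; exact hy ▸ hx

/-- The connected component of `v` inside the vertex set `s`. -/
def compSet (G : SimpleGraph V) (s : Set V) (v : V) : Set V := {u | ReachIn G s v u}

lemma compSet_subset {s : Set V} {v : V} : compSet G s v ⊆ s := fun _ h => h.mem_right

lemma mem_compSet_self {s : Set V} {v : V} (h : v ∈ s) : v ∈ compSet G s v := ReachIn.refl h

lemma compSet_eq_of_mem {s : Set V} {u v : V} (h : u ∈ compSet G s v) :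
    compSet G s u = compSet G s v := by
  ext x
  exact ⟨fun hx => (h : ReachIn G s v u).trans hx, fun hx => (h : ReachIn G s v u).symm.trans hx⟩

lemma compSet_closure {s : Set V} {v z x : V} (hz : z ∈ compSet G s v) (hadj : G.Adj x z)
    (hx : x ∈ s) : x ∈ compSet G s v :=
  (hz : ReachIn G s v z).concat hadj.symm hx

lemma compSet_mono {s s' : Set V} (hss : s ⊆ s') {v : V} :
    compSet G s v ⊆ compSet G s' v := fun _ h => h.mono hss

lemma reachable_induce_of_walk {C : Set V} : ∀ {u u' : V} (w : G.Walk u u'),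
    (∀ x ∈ w.support, x ∈ C) → ∀ (hu : u ∈ C) (hu' : u' ∈ C),
    (G.induce C).Reachable ⟨u, hu⟩ ⟨u', hu'⟩ := by
  intro u u' w
  induction w with
  | nil => intro _ hu hu'; rfl
  | @cons a b c h p ih =>
    intro hsup hu hu'
    have hb : b ∈ C := hsup b (by simp)
    have : (G.induce C).Adj ⟨a, hu⟩ ⟨b, hb⟩ := h
    exact this.reachable.trans (ih (fun x hx => hsup x (by simp [hx])) hb hu')

lemma compSet_connected {s : Set V} {v : V} (hv : v ∈ s) :
    (G.induce (compSet G s v)).Connected := by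
  have hvv : v ∈ compSet G s v := mem_compSet_self hv
  have key : ∀ (u : V) (hu : u ∈ compSet G s v),
      (G.induce (compSet G s v)).Reachable ⟨v, hvv⟩ ⟨u, hu⟩ := by
    intro u hu
    obtain ⟨w, hw⟩ := id (hu : ReachIn G s v u)
    refine reachable_induce_of_walk w (fun x hx => ?_) hvv hu
    exact ⟨w.takeUntil x hx, fun y hy => hw y (w.support_takeUntil_subset hx hy)⟩
  haveI : Nonempty ↥(compSet G s v) := ⟨⟨v, hvv⟩⟩
  refine SimpleGraph.Connected.mk fun a b => ?_
  have := (key ↑a a.2).symm.trans (key ↑b b.2)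
  simpa using this

end Stmt6Aux

section TreeLems
variable {V : Type} [Fintype V] [DecidableEq V] {G : SimpleGraph V} (D : RTD V G)

/-- `s` is a descendant of `t`. -/
def Desc (s t : D.ι) : Prop := ∃ n, D.parent^[n] s = t

lemma desc_refl (t : D.ι) : Desc D t t := ⟨0, rfl⟩

lemma desc_parent (t : D.ι) : Desc D t (D.parent t) := ⟨1, rfl⟩

lemma desc_trans {a b c : D.ι} (h : Desc D a b) (h' : Desc D b c) : Desc D a c := by
  obtain ⟨n, hn⟩ := h; obtain ⟨m, hm⟩ := h'
  exact ⟨m + n, by rw [Function.iterate_add_apply, hn, hm]⟩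

lemma iterate_parent_root (n : ℕ) : D.parent^[n] D.root = D.root := by
  induction n with
  | zero => rfl
  | succ n ih => rw [Function.iterate_succ_apply, D.parent_root, ih]

lemma desc_root (s : D.ι) : Desc D s D.root := D.reaches_root s

lemma root_desc {t : D.ι} (h : Desc D D.root t) : t = D.root := by
  obtain ⟨n, hn⟩ := h; rw [iterate_parent_root] at hn; exact hn.symm

lemma iterate_fix {f : D.ι → D.ι} {t : D.ι} (h : f t = t) (n : ℕ) : f^[n] t = t := by
  induction n with
  | zero => rfl
  | succ n ih => rw [Function.iterate_succ_apply, h, ih]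

lemma parent_eq_self_iff {t : D.ι} : D.parent t = t ↔ t = D.root := by
  constructor
  · intro h
    obtain ⟨n, hn⟩ := D.reaches_root t
    rw [iterate_fix D h] at hn; exact hn
  · intro h; rw [h, D.parent_root]

lemma desc_antisymm {a b : D.ι} (h : Desc D a b) (h' : Desc D b a) : a = b := by
  obtain ⟨n, hn⟩ := h; obtain ⟨m, hm⟩ := h'
  rcases Nat.eq_zero_or_pos n with h0 | h0
  · rw [h0] at hn; exact hn
  rcases Nat.eq_zero_or_pos m with h1 | h1
  · rw [h1] at hm; exact hm.symm
  -- a is on a cycle of length m+n, hence a = root, hence b = root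
  have hcyc : D.parent^[m + n] a = a := by rw [Function.iterate_add_apply, hn, hm]
  obtain ⟨N, hN⟩ := D.reaches_root a
  have hNpos : 0 < m + n := by omega
  have hper : ∀ k, D.parent^[k * (m + n)] a = a := by
    intro k
    induction k with
    | zero => simp
    | succ k ih => rw [Nat.succ_mul, Function.iterate_add_apply, hcyc, ih]
  have hroot : a = D.root := by
    have hge : N ≤ N * (m + n) := Nat.le_mul_of_pos_right N hNpos
    have := hper N
    rw [show N * (m + n) = (N * (m + n) - N) + N by omega,
      Function.iterate_add_apply, hN, iterate_parent_root] at this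
    exact this.symm
  rw [hroot] at hn ⊢
  rw [iterate_parent_root] at hn; exact hn

lemma not_desc_parent {t : D.ι} (h : t ≠ D.root) : ¬ Desc D (D.parent t) t := by
  intro hd
  have : D.parent t = t := desc_antisymm D hd (desc_parent D t)
  exact h (parent_eq_self_iff D |>.mp this)

/-- Depth of a node: distance to the root. -/
noncomputable def depth (t : D.ι) : ℕ := Nat.find (D.reaches_root t)

lemma depth_eq_zero_iff {t : D.ι} : depth D t = 0 ↔ t = D.root := by
  constructor
  · intro h
    have := Nat.find_spec (D.reaches_root t)
    rw [show Nat.find (D.reaches_root t) = depth D t from rfl, h] at this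
    exact this
  · intro h; subst h
    simp only [depth]
    exact Nat.le_zero.mp (Nat.find_le rfl)

lemma depth_parent_lt {t : D.ι} (h : t ≠ D.root) : depth D (D.parent t) < depth D t := by
  have hpos : 0 < depth D t := Nat.pos_of_ne_zero (fun h0 => h ((depth_eq_zero_iff D).mp h0))
  have hspec : D.parent^[depth D t] t = D.root := Nat.find_spec (D.reaches_root t)
  have : D.parent^[depth D t - 1] (D.parent t) = D.root := by
    rw [← Function.iterate_succ_apply, Nat.succ_eq_add_one, Nat.sub_add_cancel hpos]
    exact hspec
  calc depth D (D.parent t) ≤ depth D t - 1 := Nat.find_le this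
    _ < depth D t := by omega

lemma desc_step {s t : D.ι} (h : Desc D s t) (hne : s ≠ t) : Desc D (D.parent s) t := by
  obtain ⟨n, hn⟩ := h
  cases n with
  | zero => exact absurd hn hne
  | succ n => exact ⟨n, by rwa [Function.iterate_succ_apply] at hn⟩

/-- The key "flip" lemma: a walk in an induced subgraph of the tree graph from a
non-descendant of `t` to a descendant of `t` must pass through the edge `t`–`parent t`. -/
lemma flip_walk {S : Set D.ι} {t : D.ι} {a b : ↥S}
    (w : ((SimpleGraph.fromRel fun s t => D.parent s = t).induce S).Walk a b) :
    ¬ Desc D ↑a t → Desc D ↑b t → t ∈ S ∧ D.parent t ∈ S ∧ D.parent t ≠ t := by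
  induction w with
  | nil => intro ha hb; exact absurd hb ha
  | @cons p q r hadj w ih =>
    intro ha hb
    have hadj0 : (SimpleGraph.fromRel fun s t => D.parent s = t).Adj ↑p ↑q := hadj
    have hadj' : ((↑p : D.ι) ≠ ↑q) ∧ (D.parent ↑p = ↑q ∨ D.parent ↑q = ↑p) :=
      (SimpleGraph.fromRel_adj _ _ _).mp hadj0
    by_cases hq : Desc D ↑q t
    · rcases hadj'.2 with h | h
      · exact absurd (desc_trans D (h ▸ desc_parent D ↑p) hq) ha
      · by_cases hqt : (↑q : D.ι) = t
        · subst hqt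
          refine ⟨q.2, h ▸ p.2, ?_⟩
          rw [h]; exact hadj'.1
        · exact absurd (h ▸ desc_step D hq hqt) ha
    · exact ih hq hb

lemma flip_lemma {S : Set D.ι} {t : D.ι} {a b : ↥S}
    (hr : ((SimpleGraph.fromRel fun s t => D.parent s = t).induce S).Reachable a b)
    (ha : ¬ Desc D ↑a t) (hb : Desc D ↑b t) :
    t ∈ S ∧ D.parent t ∈ S ∧ D.parent t ≠ t := by
  obtain ⟨w⟩ := hr
  exact flip_walk D w ha hb

end TreeLems

section BagLems
open Stmt6Aux
variable {V : Type} [Fintype V] [DecidableEq V] {G : SimpleGraph V} (D : RTD V G)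

lemma reach_bags {v : V} {a b : D.ι} (ha : v ∈ D.bag a) (hb : v ∈ D.bag b) :
    ((SimpleGraph.fromRel fun s t => D.parent s = t).induce {t | v ∈ D.bag t}).Reachable
      ⟨a, ha⟩ ⟨b, hb⟩ :=
  (D.bags_connected v (Finset.mem_univ v)).preconnected ⟨a, ha⟩ ⟨b, hb⟩

lemma exists_bag (v : V) : ∃ t, v ∈ D.bag t := by
  have := (D.bags_connected v (Finset.mem_univ v)).nonempty
  obtain ⟨⟨t, ht⟩⟩ := this
  exact ⟨t, ht⟩

/-- Intermediate bag along the tree: if `v` is in bags at `a` and at an ancestor `b ≠ a`,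
then `v` is in the bag at `parent a`. -/
lemma parent_mem_bags {v : V} {a b : D.ι} (ha : v ∈ D.bag a) (hb : v ∈ D.bag b)
    (hd : Desc D a b) (hne : a ≠ b) : v ∈ D.bag (D.parent a) := by
  have hnd : ¬ Desc D b a := fun h => hne (desc_antisymm D hd h)
  have := flip_lemma D (S := {t | v ∈ D.bag t}) (t := a)
    (reach_bags D hb ha).symm.symm ?_ (desc_refl D a)
  · exact this.2.1
  · exact hnd

/-- Every vertex has a "top" node: a bag containing it that is an ancestor of all
bags containing it. -/
lemma exists_top (v : V) : ∃ t, v ∈ D.bag t ∧ ∀ s, v ∈ D.bag s → Desc D s t := by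
  obtain ⟨t₀, ht₀⟩ := exists_bag D v
  obtain ⟨t, ht, hmin⟩ := Finset.exists_min_image
    (Finset.univ.filter fun t => v ∈ D.bag t) (depth D)
    ⟨t₀, by simp [ht₀]⟩
  rw [Finset.mem_filter] at ht
  refine ⟨t, ht.2, fun s hs => ?_⟩
  by_contra hnd
  obtain ⟨h1, h2, h3⟩ := flip_lemma D (S := {t | v ∈ D.bag t}) (t := t)
    (reach_bags D hs ht.2) hnd (desc_refl D t)
  have htr : t ≠ D.root := fun h => h3 (by rw [h, D.parent_root])
  have := hmin (D.parent t) (by simp [Set.mem_setOf_eq.mp h2])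
  exact absurd this (by simpa using depth_parent_lt D htr)

lemma sigma_subset_bag (t : D.ι) : D.sigmaBag t ⊆ D.bag t := by
  unfold RTDOn.sigmaBag
  split
  · exact Finset.empty_subset _
  · exact Finset.inter_subset_left

lemma sigma_subset_parent (t : D.ι) : D.sigmaBag t ⊆ D.bag (D.parent t) := by
  unfold RTDOn.sigmaBag
  split
  · exact Finset.empty_subset _
  · exact Finset.inter_subset_right

lemma mem_gamma_of_bag {v : V} {s t : D.ι} (h : v ∈ D.bag s) (hd : Desc D s t) :
    v ∈ D.gammaSet t := ⟨s, hd, h⟩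

/-- All bags containing a vertex of `α(t)` are descendants of `t`. -/
lemma desc_of_mem_alpha {v : V} {t s : D.ι} (hv : v ∈ D.alphaSet t) (hs : v ∈ D.bag s) :
    Desc D s t := by
  obtain ⟨⟨s₀, hd₀, hb₀⟩, hns⟩ := hv
  by_cases htr : t = D.root
  · exact htr ▸ desc_root D s
  by_contra hnd
  obtain ⟨h1, h2, _⟩ := flip_lemma D (S := {u | v ∈ D.bag u}) (t := t)
    (reach_bags D hs hb₀) hnd hd₀
  apply hns
  simp only [RTDOn.sigmaBag, if_neg htr, Finset.coe_inter, Set.mem_inter_iff]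
  exact ⟨h1, h2⟩

lemma alpha_parent_disj {t : D.ι} (htr : t ≠ D.root) {v : V} (hv : v ∈ D.alphaSet t) :
    v ∉ D.bag (D.parent t) := fun h => not_desc_parent D htr (desc_of_mem_alpha D hv h)

lemma alpha_mono {t : D.ι} (htr : t ≠ D.root) : D.alphaSet t ⊆ D.alphaSet (D.parent t) := by
  rintro v ⟨⟨s₀, hd₀, hb₀⟩, hns⟩
  refine ⟨⟨s₀, desc_trans D hd₀ (desc_parent D t), hb₀⟩, fun hmem => ?_⟩
  exact alpha_parent_disj D htr ⟨⟨s₀, hd₀, hb₀⟩, hns⟩ (sigma_subset_bag D (D.parent t) hmem)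

lemma sigma_root : D.sigmaBag D.root = ∅ := by simp [RTDOn.sigmaBag]

lemma alpha_root : D.alphaSet D.root = Set.univ := by
  ext v
  simp only [RTDOn.alphaSet, sigma_root, Finset.coe_empty, Set.diff_empty, Set.mem_univ,
    iff_true]
  obtain ⟨t, ht⟩ := exists_bag D v
  exact ⟨t, desc_root D t, ht⟩

lemma top_mem_alpha {v : V} {t : D.ι} (h1 : v ∈ D.bag t) (h2 : ∀ s, v ∈ D.bag s → Desc D s t) :
    v ∈ D.alphaSet t := by
  refine ⟨⟨t, desc_refl D t, h1⟩, fun hmem => ?_⟩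
  by_cases htr : t = D.root
  · subst htr; rw [sigma_root] at hmem; simp at hmem
  · simp only [RTDOn.sigmaBag, if_neg htr, Finset.coe_inter, Set.mem_inter_iff,
      Finset.mem_coe] at hmem
    exact not_desc_parent D htr (h2 (D.parent t) hmem.2)

/-- Neighbourhoods of components of `G[α(t)]` lie in `σ(t)`. -/
lemma nbhd_subset_sigma {t : D.ι} {u : V} (hu : u ∈ D.alphaSet t) :
    extNbhd G (compSet G (D.alphaSet t) u) ⊆ ↑(D.sigmaBag t) := by
  rintro x ⟨hxC, z, hzC, hadj⟩
  have hz : z ∈ D.alphaSet t := compSet_subset hzC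
  obtain ⟨s, hxs, hzs⟩ := D.edge_in_bag x (Finset.mem_univ x) z (Finset.mem_univ z) hadj
  have hds : Desc D s t := desc_of_mem_alpha D hz hzs
  have hxγ : x ∈ D.gammaSet t := ⟨s, hds, hxs⟩
  by_contra hxσ
  exact hxC (compSet_closure hzC hadj ⟨hxγ, hxσ⟩)

end BagLems

section NewDecomp
open Stmt6Aux Classical
variable {V : Type} [Fintype V] [DecidableEq V] {G : SimpleGraph V}

/-- Nodes of the new decomposition: pairs of a node `t` of the old tree together with
a connected component of `G[α(t)]`. -/
def NewNode (D : RTD V G) : Type :=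
  {p : D.ι × Set V // ∃ v ∈ D.alphaSet p.1, p.2 = compSet G (D.alphaSet p.1) v}

noncomputable instance (D : RTD V G) : Fintype (NewNode D) := by
  unfold NewNode; exact Subtype.fintype _

variable (D : RTD V G)

noncomputable def vtx (p : NewNode D) : V := p.2.choose

lemma vtx_mem (p : NewNode D) : vtx D p ∈ D.alphaSet p.1.1 := p.2.choose_spec.1

lemma snd_eq (p : NewNode D) : p.1.2 = compSet G (D.alphaSet p.1.1) (vtx D p) :=
  p.2.choose_spec.2

lemma snd_subset_alpha (p : NewNode D) : p.1.2 ⊆ D.alphaSet p.1.1 := by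
  rw [snd_eq]; exact compSet_subset

lemma comp_of_mem_snd {p : NewNode D} {u : V} (hu : u ∈ p.1.2) :
    p.1.2 = compSet G (D.alphaSet p.1.1) u := by
  rw [snd_eq D p] at hu ⊢
  rw [compSet_eq_of_mem hu]

noncomputable def newParent (p : NewNode D) : NewNode D :=
  if h : p.1.1 = D.root then p else
    ⟨(D.parent p.1.1, compSet G (D.alphaSet (D.parent p.1.1)) (vtx D p)),
      ⟨vtx D p, alpha_mono D h (vtx_mem D p), rfl⟩⟩

lemma newParent_root_fix {p : NewNode D} (h : p.1.1 = D.root) : newParent D p = p :=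
  dif_pos h

lemma newParent_fst {p : NewNode D} (h : p.1.1 ≠ D.root) :
    (newParent D p).1.1 = D.parent p.1.1 := by
  have e : newParent D p = ⟨(D.parent p.1.1, compSet G (D.alphaSet (D.parent p.1.1)) (vtx D p)),
      ⟨vtx D p, alpha_mono D h (vtx_mem D p), rfl⟩⟩ := dif_neg h
  rw [e]

lemma newParent_snd {p : NewNode D} (h : p.1.1 ≠ D.root) :
    (newParent D p).1.2 = compSet G (D.alphaSet (D.parent p.1.1)) (vtx D p) := by
  have e : newParent D p = ⟨(D.parent p.1.1, compSet G (D.alphaSet (D.parent p.1.1)) (vtx D p)),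
      ⟨vtx D p, alpha_mono D h (vtx_mem D p), rfl⟩⟩ := dif_neg h
  rw [e]

lemma subset_newParent (p : NewNode D) : p.1.2 ⊆ (newParent D p).1.2 := by
  by_cases h : p.1.1 = D.root
  · rw [newParent_root_fix D h]
  · rw [newParent_snd D h, snd_eq D p]
    exact compSet_mono (alpha_mono D h)

lemma compSet_univ (hG : G.Connected) (v : V) : compSet G Set.univ v = Set.univ := by
  ext u
  simp only [Set.mem_univ, iff_true]
  exact (hG.preconnected v u).elim fun w => ⟨w, fun x _ => trivial⟩

variable (hG : G.Connected)

noncomputable def newRoot : NewNode D :=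
  ⟨(D.root, Set.univ),
    ⟨hG.nonempty.some, by rw [alpha_root]; trivial, by rw [alpha_root, compSet_univ hG]⟩⟩

lemma eq_newRoot {p : NewNode D} (h : p.1.1 = D.root) : p = newRoot D hG := by
  have h2 : p.1.2 = Set.univ := by
    rw [snd_eq D p, h, alpha_root, compSet_univ hG]
  exact Subtype.ext (Prod.ext h h2)

lemma newParent_reaches (p : NewNode D) : ∃ n, (newParent D)^[n] p = newRoot D hG := by
  suffices H : ∀ n (p : NewNode D), depth D p.1.1 ≤ n →
      ∃ m, (newParent D)^[m] p = newRoot D hG from H (depth D p.1.1) p le_rfl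
  intro n
  induction n with
  | zero =>
    intro p hp
    have : p.1.1 = D.root := (depth_eq_zero_iff D).mp (Nat.le_zero.mp hp)
    exact ⟨0, (eq_newRoot D hG this).symm ▸ rfl⟩
  | succ n ih =>
    intro p hp
    by_cases h : p.1.1 = D.root
    · exact ⟨0, (eq_newRoot D hG h).symm ▸ rfl⟩
    · have hd : depth D (newParent D p).1.1 ≤ n := by
        rw [newParent_fst D h]
        have := depth_parent_lt D h
        omega
      obtain ⟨m, hm⟩ := ih (newParent D p) hd
      exact ⟨m + 1, by rw [Function.iterate_succ_apply]; exact hm⟩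

noncomputable def newBag (p : NewNode D) : Finset V :=
  (D.bag p.1.1).filter fun x => x ∈ p.1.2 ∨ x ∈ extNbhd G p.1.2

lemma mem_newBag {p : NewNode D} {x : V} :
    x ∈ newBag D p ↔ x ∈ D.bag p.1.1 ∧ (x ∈ p.1.2 ∨ x ∈ extNbhd G p.1.2) :=
  Finset.mem_filter

lemma newBag_subset (p : NewNode D) : newBag D p ⊆ D.bag p.1.1 :=
  Finset.filter_subset _ _

lemma nbhd_snd_subset_sigma (p : NewNode D) :
    extNbhd G p.1.2 ⊆ ↑(D.sigmaBag p.1.1) := by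
  rw [snd_eq D p]
  exact nbhd_subset_sigma D (vtx_mem D p)

lemma nbhd_mono {C C' : Set V} (h : C ⊆ C') :
    extNbhd G C ⊆ C' ∪ extNbhd G C' := by
  rintro x ⟨hx, z, hz, hadj⟩
  by_cases hxC' : x ∈ C'
  · exact Or.inl hxC'
  · exact Or.inr ⟨hxC', z, h hz, hadj⟩

lemma newEdge_in_bag {u v : V} (hadj : G.Adj u v) :
    ∃ p : NewNode D, u ∈ newBag D p ∧ v ∈ newBag D p := by
  have main : ∀ u v : V, G.Adj u v → ∀ t₀ : D.ι, u ∈ D.bag t₀ → v ∈ D.bag t₀ →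
      u ∈ D.alphaSet t₀ → ∃ p : NewNode D, u ∈ newBag D p ∧ v ∈ newBag D p := by
    intro u v hadj t₀ hu hv huα
    refine ⟨⟨(t₀, compSet G (D.alphaSet t₀) u), ⟨u, huα, rfl⟩⟩, ?_, ?_⟩
    · exact (mem_newBag D).mpr ⟨hu, Or.inl (mem_compSet_self huα)⟩
    · refine (mem_newBag D).mpr ⟨hv, ?_⟩
      by_cases hvC : v ∈ compSet G (D.alphaSet t₀) u
      · exact Or.inl hvC
      · exact Or.inr ⟨hvC, u, mem_compSet_self huα, hadj.symm⟩
  obtain ⟨s, hus, hvs⟩ := D.edge_in_bag u (Finset.mem_univ u) v (Finset.mem_univ v) hadj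
  obtain ⟨t₀, ht₀, hmin⟩ := Finset.exists_min_image
    (Finset.univ.filter fun t => u ∈ D.bag t ∧ v ∈ D.bag t) (depth D)
    ⟨s, by simp [hus, hvs]⟩
  rw [Finset.mem_filter] at ht₀
  obtain ⟨-, hu, hv⟩ := ht₀
  by_cases huα : u ∈ D.alphaSet t₀
  · exact main u v hadj t₀ hu hv huα
  by_cases hvα : v ∈ D.alphaSet t₀
  · obtain ⟨p, h1, h2⟩ := main v u hadj.symm t₀ hv hu hvα
    exact ⟨p, h2, h1⟩
  -- both in σ(t₀): contradiction with minimality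
  exfalso
  have huσ : u ∈ ↑(D.sigmaBag t₀) := by
    by_contra h
    exact huα ⟨⟨t₀, desc_refl D t₀, hu⟩, h⟩
  have htr : t₀ ≠ D.root := by
    intro h
    rw [h, sigma_root] at huσ
    simp at huσ
  have hvσ : v ∈ ↑(D.sigmaBag t₀) := by
    by_contra h
    exact hvα ⟨⟨t₀, desc_refl D t₀, hv⟩, h⟩
  have := hmin (D.parent t₀) (by
    simp only [Finset.mem_filter, Finset.mem_univ, true_and]
    exact ⟨sigma_subset_parent D t₀ huσ, sigma_subset_parent D t₀ hvσ⟩)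
  exact absurd this (by simpa using depth_parent_lt D htr)

lemma newBags_connected (v : V) :
    ((SimpleGraph.fromRel fun s t : NewNode D => newParent D s = t).induce
      {p : NewNode D | v ∈ newBag D p}).Connected := by
  obtain ⟨tS, ht1, ht2⟩ := exists_top D v
  have hα : v ∈ D.alphaSet tS := top_mem_alpha D ht1 ht2
  have hpprop : ∃ w ∈ D.alphaSet tS, compSet G (D.alphaSet tS) v = compSet G (D.alphaSet tS) w :=
    ⟨v, hα, rfl⟩
  set pstar : NewNode D := ⟨(tS, compSet G (D.alphaSet tS) v), hpprop⟩ with hpstar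
  have hpv : v ∈ newBag D pstar := (mem_newBag D).mpr ⟨ht1, Or.inl (mem_compSet_self hα)⟩
  have eqstar : ∀ p : NewNode D, v ∈ newBag D p → p.1.1 = tS → p = pstar := by
    intro p hp he
    obtain ⟨hb, hc⟩ := (mem_newBag D).mp hp
    rcases hc with hc | hc
    · have : p.1.2 = compSet G (D.alphaSet tS) v := by
        rw [comp_of_mem_snd D hc, he]
      exact Subtype.ext (Prod.ext he this)
    · exfalso
      have := nbhd_snd_subset_sigma D p hc
      rw [he] at this
      exact hα.2 this
  have key : ∀ n (p : NewNode D) (hp : v ∈ newBag D p), depth D p.1.1 ≤ n →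
      ((SimpleGraph.fromRel fun s t : NewNode D => newParent D s = t).induce
        {p : NewNode D | v ∈ newBag D p}).Reachable ⟨p, hp⟩ ⟨pstar, hpv⟩ := by
    intro n
    induction n with
    | zero =>
      intro p hp hd
      have hroot : p.1.1 = D.root := (depth_eq_zero_iff D).mp (Nat.le_zero.mp hd)
      have htt : p.1.1 = tS := by
        have hdesc : Desc D p.1.1 tS := ht2 _ ((mem_newBag D).mp hp).1
        rw [hroot] at hdesc
        rw [hroot, root_desc D hdesc]
      have heq : (⟨p, hp⟩ : ↥{q : NewNode D | v ∈ newBag D q}) = ⟨pstar, hpv⟩ :=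
        Subtype.ext (eqstar p hp htt)
      rw [heq]
    | succ n ih =>
      intro p hp hd
      by_cases htt : p.1.1 = tS
      · have heq : (⟨p, hp⟩ : ↥{q : NewNode D | v ∈ newBag D q}) = ⟨pstar, hpv⟩ :=
          Subtype.ext (eqstar p hp htt)
        rw [heq]
      have hv1 : v ∈ D.bag p.1.1 := ((mem_newBag D).mp hp).1
      have hdesc : Desc D p.1.1 tS := ht2 _ hv1
      have hroot : p.1.1 ≠ D.root := by
        intro h
        rw [h] at hdesc
        exact htt (by rw [h, root_desc D hdesc])
      have hpp : v ∈ newBag D (newParent D p) := by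
        refine (mem_newBag D).mpr ⟨?_, ?_⟩
        · rw [newParent_fst D hroot]
          exact parent_mem_bags D hv1 ht1 hdesc htt
        · rcases ((mem_newBag D).mp hp).2 with hc | hc
          · exact Or.inl (subset_newParent D p hc)
          · exact nbhd_mono (subset_newParent D p) hc
      have hdd : depth D (newParent D p).1.1 ≤ n := by
        rw [newParent_fst D hroot]
        have := depth_parent_lt D hroot
        omega
      have hne2 : p ≠ newParent D p := by
        intro he
        apply hroot
        apply (parent_eq_self_iff D).mp
        have := congrArg (fun q : NewNode D => q.1.1) he
        rw [newParent_fst D hroot] at this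
        exact this.symm
      have hAdj : ((SimpleGraph.fromRel fun s t : NewNode D => newParent D s = t).induce
          {p : NewNode D | v ∈ newBag D p}).Adj ⟨p, hp⟩ ⟨newParent D p, hpp⟩ := by
        show (SimpleGraph.fromRel fun s t : NewNode D => newParent D s = t).Adj p (newParent D p)
        exact (SimpleGraph.fromRel_adj _ _ _).mpr ⟨hne2, Or.inl rfl⟩
      exact hAdj.reachable.trans (ih (newParent D p) hpp hdd)
  haveI : Nonempty ↥{p : NewNode D | v ∈ newBag D p} := ⟨⟨pstar, hpv⟩⟩
  refine SimpleGraph.Connected.mk fun a b => ?_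
  have ra := key (depth D (↑a : NewNode D).1.1) ↑a a.2 le_rfl
  have rb := key (depth D (↑b : NewNode D).1.1) ↑b b.2 le_rfl
  have := ra.trans rb.symm
  simpa using this

/-- The connectivity-sensitive refinement of `D`. -/
noncomputable def newRTD : RTD V G where
  ι := NewNode D
  instFintype := inferInstance
  instDecEq := Classical.decEq _
  root := newRoot D hG
  parent := newParent D
  parent_root := newParent_root_fix D rfl
  reaches_root := newParent_reaches D hG
  bag := newBag D
  bag_subset := fun _ => Finset.subset_univ _
  bags_connected := fun v _ => newBags_connected D v
  edge_in_bag := fun u _ v _ h => newEdge_in_bag D h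

end NewDecomp

section FinalLems
open Stmt6Aux Classical
variable {V : Type} [Fintype V] [DecidableEq V] {G : SimpleGraph V} (D : RTD V G)
  (hG : G.Connected)

lemma newDesc_snd_subset : ∀ (n : ℕ) (q p : NewNode D), (newParent D)^[n] q = p →
    q.1.2 ⊆ p.1.2 := by
  intro n
  induction n with
  | zero =>
    intro q p h
    rw [Function.iterate_zero_apply] at h
    rw [h]
  | succ n ih =>
    intro q p h
    rw [Function.iterate_succ_apply] at h
    exact (subset_newParent D q).trans (ih (newParent D q) p h)

lemma newDesc_of_desc (hG : G.Connected) : ∀ (n : ℕ) (q p : NewNode D) (u : V), u ∈ q.1.2 → u ∈ p.1.2 →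
    D.parent^[n] q.1.1 = p.1.1 → (newParent D)^[n] q = p := by
  intro n
  induction n with
  | zero =>
    intro q p u hq hp h
    rw [Function.iterate_zero_apply] at h
    rw [Function.iterate_zero_apply]
    refine Subtype.ext (Prod.ext h ?_)
    rw [comp_of_mem_snd D hq, comp_of_mem_snd D hp, h]
  | succ n ih =>
    intro q p u hq hp h
    by_cases hr : q.1.1 = D.root
    · have hpr : p.1.1 = D.root := by
        rw [← h, hr, iterate_parent_root]
      have h1 : q = newRoot D hG := eq_newRoot D hG hr
      have h2 : p = newRoot D hG := eq_newRoot D hG hpr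
      rw [h1, h2, Function.iterate_fixed (newParent_root_fix D rfl)]
    · rw [Function.iterate_succ_apply]
      refine ih (newParent D q) p u (subset_newParent D q hq) hp ?_
      rw [newParent_fst D hr]
      rw [Function.iterate_succ_apply] at h
      exact h

lemma newGamma (p : NewNode D) :
    (newRTD D hG).gammaSet p = p.1.2 ∪ extNbhd G p.1.2 := by
  ext x
  constructor
  · rintro ⟨q, ⟨n, hn⟩, hx⟩
    have h1 : q.1.2 ⊆ p.1.2 := newDesc_snd_subset D n q p hn
    rcases ((mem_newBag D).mp hx).2 with h | h
    · exact Or.inl (h1 h)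
    · exact nbhd_mono h1 h
  · rintro (hx | hx)
    · obtain ⟨ts, hts1, hts2⟩ := exists_top D x
      have hxα : x ∈ D.alphaSet ts := top_mem_alpha D hts1 hts2
      have hxa : x ∈ D.alphaSet p.1.1 := snd_subset_alpha D p hx
      obtain ⟨n, hn⟩ := desc_of_mem_alpha D hxa hts1
      refine ⟨⟨(ts, compSet G (D.alphaSet ts) x), ⟨x, hxα, rfl⟩⟩, ⟨n, ?_⟩,
        (mem_newBag D).mpr ⟨hts1, Or.inl (mem_compSet_self hxα)⟩⟩
      exact newDesc_of_desc D hG n _ p x (mem_compSet_self hxα) hx hn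
    · have hσ : x ∈ ↑(D.sigmaBag p.1.1) := nbhd_snd_subset_sigma D p hx
      exact ⟨p, ⟨0, rfl⟩, (mem_newBag D).mpr ⟨sigma_subset_bag D _ hσ, Or.inr hx⟩⟩

lemma newSigma (p : NewNode D) :
    ↑((newRTD D hG).sigmaBag p) = extNbhd G p.1.2 := by
  by_cases hp : p = newRoot D hG
  · have h2 : p.1.2 = Set.univ := by rw [hp]; rfl
    have : (newRTD D hG).sigmaBag p = ∅ := by
      simp only [RTDOn.sigmaBag, if_pos (show p = (newRTD D hG).root from hp)]
      exact if_pos hp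
    rw [this, h2]
    ext x
    simp only [Finset.coe_empty, Set.mem_empty_iff_false, false_iff]
    rintro ⟨h, -⟩
    exact h trivial
  · have hroot : p.1.1 ≠ D.root := fun h => hp (eq_newRoot D hG h)
    have hσ : (newRTD D hG).sigmaBag p = newBag D p ∩ newBag D (newParent D p) := by
      simp only [RTDOn.sigmaBag, if_neg (show ¬ p = (newRTD D hG).root from hp)]
      exact if_neg hp
    rw [hσ]
    ext x
    simp only [Finset.coe_inter, Set.mem_inter_iff, Finset.mem_coe]
    constructor
    · rintro ⟨hx1, hx2⟩
      have hxp : x ∈ D.bag (D.parent p.1.1) := by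
        have := newBag_subset D (newParent D p) hx2
        rwa [newParent_fst D hroot] at this
      rcases ((mem_newBag D).mp hx1).2 with hc | hc
      · exact absurd hxp (alpha_parent_disj D hroot (snd_subset_alpha D p hc))
      · exact hc
    · intro hx
      have hσx : x ∈ ↑(D.sigmaBag p.1.1) := nbhd_snd_subset_sigma D p hx
      refine ⟨(mem_newBag D).mpr ⟨sigma_subset_bag D _ hσx, Or.inr hx⟩, ?_⟩
      refine (mem_newBag D).mpr ⟨?_, ?_⟩
      · rw [newParent_fst D hroot]
        exact sigma_subset_parent D _ hσx
      · exact nbhd_mono (subset_newParent D p) hx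

lemma newAlpha (p : NewNode D) : (newRTD D hG).alphaSet p = p.1.2 := by
  unfold RTDOn.alphaSet
  rw [newGamma D hG p, newSigma D hG p]
  ext x
  constructor
  · rintro ⟨hx | hx, hn⟩
    · exact hx
    · exact absurd hx hn
  · intro hx
    exact ⟨Or.inl hx, fun hN => hN.1 hx⟩

end FinalLems

/-- Every rooted tree decomposition of width `k` and adhesion width `ℓ`
of a connected graph can be turned into a connectivity-sensitive one of width at most
`k` and adhesion width at most `ℓ`, each of whose bags is contained in some original bag. -/
theorem stmt6 {V : Type} [Fintype V] [DecidableEq V] (G : SimpleGraph V)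
    (hG : G.Connected) (k l : ℕ) (D : RTD V G)
    (hw : D.widthLe k) (ha : D.adhesionLe l) :
    ∃ D' : RTD V G, IsCSDecomp D' ∧ D'.widthLe k ∧ D'.adhesionLe l ∧
      ∀ t : D'.ι, ∃ s : D.ι, D'.bag t ⊆ D.bag s := by
  classical
  refine ⟨newRTD D hG, fun p => ?_, fun p => ?_, fun p hp => ?_,
    fun p => ⟨p.1.1, newBag_subset D p⟩⟩
  · constructor
    · rw [newAlpha D hG p, snd_eq D p]
      exact Stmt6Aux.compSet_connected (vtx_mem D p)
    · rw [newAlpha D hG p, newSigma D hG p]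
  · exact le_trans (Finset.card_le_card (newBag_subset D p)) (hw p.1.1)
  · have hroot : p.1.1 ≠ D.root := fun h => hp (eq_newRoot D hG h)
    have hsub : (newRTD D hG).bag p ∩ (newRTD D hG).bag ((newRTD D hG).parent p) ⊆
        D.bag p.1.1 ∩ D.bag (D.parent p.1.1) := by
      refine Finset.inter_subset_inter (newBag_subset D p) ?_
      have := newBag_subset D (newParent D p)
      rwa [newParent_fst D hroot] at this
    exact le_trans (Finset.card_le_card hsub) (ha p.1.1 hroot)
end
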